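/- arXiv:1909.09916 — 8 statements merged into one kernel-verified Lean document; each statement's English description precedes it below -/
import Mathlib

section
/- Let G be a finite connected simple graph and let P = (v_0, …, v_k) be a geodesic path in G. In the game of Surrounding Cops and Robbers on G, three cops have a strategy such that, against every robber play, after a finite number of moves the robber never again occupies a vertex of P: from some time onward, the robber's position is never a vertex of P. -/
/-!
Formalization of the game of Surrounding Cops and Robbers, played on a simple
graph `G` by a cop player controlling `m` cops and a robber player controlling
one robber, with perfect information.  The cops are placed first, then the
robber is placed on a vertex not occupied by a cop; thereafter players
alternate turns (cops first), each pawn moving along an edge or staying put,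
and the robber may never end his turn on a vertex occupied by a cop.  The cop
player wins if at some point every neighbor of the robber's vertex is occupied
by a cop.
-/

/-- One step of a cop or of the robber: stay in place or move along an edge. -/
def stepRel {V : Type*} (G : SimpleGraph V) (x y : V) : Prop := x = y ∨ G.Adj x y

/-- `histList r t = [r 0, r 1, …, r (t-1)]`: the robber's first `t` positions. -/
def histList {V : Type*} (r : ℕ → V) (t : ℕ) : List V := (List.range t).map r

/-- A cop strategy for `m` cops is a function `F` assigning to each finite history of
robber positions the current positions of the cops; `F []` is the initial placement,
made before the robber is placed, and `F (h ++ [x])` is the cops' answer after the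
robber history `h` has been extended by the robber move `x`.  The strategy is valid
if each cop always moves along an edge or stays put. -/
def ValidCopStrategy {V : Type*} (G : SimpleGraph V) {m : ℕ}
    (F : List V → Fin m → V) : Prop :=
  ∀ (h : List V) (x : V) (i : Fin m), stepRel G (F h i) (F (h ++ [x]) i)

/-- An infinite robber play `r` against the cop strategy `F` is legal if the robber
always moves along an edge or stays put, and never ends a turn on a vertex occupied
by a cop (`r 0` is the robber's initial placement, chosen after the cops have been
placed at `F []`, and `r t` is chosen when the cops stand at `F (histList r t)`). -/
def LegalPlay {V : Type*} (G : SimpleGraph V) {m : ℕ}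
    (F : List V → Fin m → V) (r : ℕ → V) : Prop :=
  (∀ t, stepRel G (r t) (r (t + 1))) ∧ ∀ t, ∀ i, F (histList r t) i ≠ r t

/-- The robber is surrounded at time `t`: after the cops' move in round `t + 1`,
every neighbor of the robber's position `r t` is occupied by a cop. -/
def SurroundedAt {V : Type*} (G : SimpleGraph V) {m : ℕ}
    (F : List V → Fin m → V) (r : ℕ → V) (t : ℕ) : Prop :=
  ∀ w, G.Adj (r t) w → ∃ i, F (histList r (t + 1)) i = w

/-- `m` cops have a winning strategy in the game of Surrounding Cops and Robbers
on `G`; equivalently, the surrounding cop number satisfies `s(G) ≤ m`. -/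
def CopsWin {V : Type*} (G : SimpleGraph V) (m : ℕ) : Prop :=
  ∃ F : List V → Fin m → V, ValidCopStrategy G F ∧
    ∀ r : ℕ → V, LegalPlay G F r → ∃ t, SurroundedAt G F r t

/-- move one step toward target -/
private def mtw (c t : ℕ) : ℕ := if c < t then c + 1 else if t < c then c - 1 else c

private def copAux {V : Type*} (f : V → ℕ) : List V → ℕ
  | [] => 0
  | x :: s => mtw (copAux f s) (f x)

private lemma getVert_dist {V : Type*} {G : SimpleGraph V} (hconn : G.Connected)
    {v0 vk : V} (p : G.Walk v0 vk) (hgeo : p.length = G.dist v0 vk) :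
    ∀ j ≤ p.length, G.dist v0 (p.getVert j) = j := by
  have hub : ∀ j, G.dist v0 (p.getVert j) ≤ j := by
    intro j
    induction j with
    | zero => simp [p.getVert_zero]
    | succ n ih =>
      by_cases hn : n < p.length
      · have hadj := p.adj_getVert_succ hn
        have h1 : G.dist (p.getVert n) (p.getVert (n+1)) = 1 :=
          SimpleGraph.dist_eq_one_iff_adj.mpr hadj
        have := hconn.dist_triangle (u := v0) (v := p.getVert n) (w := p.getVert (n+1))
        omega
      · have : p.getVert (n+1) = p.getVert n := by
          rw [p.getVert_of_length_le (by omega), p.getVert_of_length_le (by omega)]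
        rw [this]; omega
  have hlb : ∀ i, G.dist (p.getVert (p.length - i)) vk ≤ i := by
    intro i
    induction i with
    | zero => simp [p.getVert_length]
    | succ n ih =>
      by_cases hn : p.length ≤ n
      · have : p.length - (n+1) = p.length - n := by omega
        rw [this]; omega
      · have hj : p.length - (n+1) < p.length := by omega
        have hsucc : p.length - (n+1) + 1 = p.length - n := by omega
        have hadj := p.adj_getVert_succ hj
        rw [hsucc] at hadj
        have h1 : G.dist (p.getVert (p.length - (n+1))) (p.getVert (p.length - n)) = 1 :=
          SimpleGraph.dist_eq_one_iff_adj.mpr hadj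
        have := hconn.dist_triangle (u := p.getVert (p.length - (n+1)))
          (v := p.getVert (p.length - n)) (w := vk)
        omega
  intro j hj
  have h1 := hub j
  have h2 := hlb (p.length - j)
  have hjj : p.length - (p.length - j) = j := by omega
  rw [hjj] at h2
  have := hconn.dist_triangle (u := v0) (v := p.getVert j) (w := vk)
  omega

private lemma stepVert {V : Type*} {G : SimpleGraph V} {v0 vk : V} (p : G.Walk v0 vk)
    {a b : ℕ} (h : a = b ∨ a + 1 = b ∨ b + 1 = a) :
    stepRel G (p.getVert a) (p.getVert b) := by
  have key : ∀ x : ℕ, stepRel G (p.getVert x) (p.getVert (x+1)) := by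
    intro x
    by_cases hx : x < p.length
    · exact Or.inr (p.adj_getVert_succ hx)
    · exact Or.inl (by rw [p.getVert_of_length_le (by omega),
        p.getVert_of_length_le (by omega)])
  rcases h with h | h | h
  · exact Or.inl (by rw [h])
  · rw [← h]; exact key a
  · rw [← h]
    rcases key b with h' | h'
    · exact Or.inl h'.symm
    · exact Or.inr h'.symm

private lemma fLip {V : Type*} {G : SimpleGraph V} (hconn : G.Connected)
    {u w : V} (h : stepRel G u w) (v0 : V) :
    G.dist v0 w ≤ G.dist v0 u + 1 ∧ G.dist v0 u ≤ G.dist v0 w + 1 := by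
  rcases h with h | h
  · subst h; omega
  · have h1 : G.dist u w = 1 := SimpleGraph.dist_eq_one_iff_adj.mpr h
    have h2 : G.dist w u = 1 := SimpleGraph.dist_eq_one_iff_adj.mpr h.symm
    have t1 := hconn.dist_triangle (u := v0) (v := u) (w := w)
    have t2 := hconn.dist_triangle (u := v0) (v := w) (w := u)
    omega

private lemma psi_lt {D' D s' s K : ℕ} (h : D' < D ∨ (D' = D ∧ s' < s)) (hs' : s' ≤ K) :
    D' * (K + 2) + s' < D * (K + 2) + s := by
  rcases h with h | ⟨rfl, h⟩
  · have h2 : (D' + 1) * (K + 2) ≤ D * (K + 2) := Nat.mul_le_mul_right _ h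
    rw [add_mul, one_mul] at h2
    omega
  · omega


/-- Let `G` be a finite connected simple graph and let
`P = (v_0, …, v_k)` be a geodesic path in `G`.  In the game of Surrounding Cops and
Robbers on `G`, three cops have a strategy such that, against every robber play,
after a finite number of moves the robber never again occupies a vertex of `P`. -/
theorem three_cops_guard_geodesic {V : Type*} [Fintype V] (G : SimpleGraph V)
    (hconn : G.Connected) {v0 vk : V} (p : G.Walk v0 vk) (hpath : p.IsPath)
    (hgeo : p.length = G.dist v0 vk) :
    ∃ F : List V → Fin 3 → V, ValidCopStrategy G F ∧
      ∀ r : ℕ → V, LegalPlay G F r →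
        ∃ T : ℕ, ∀ t, T ≤ t → r t ∉ p.support := by
  classical
  set k := p.length with hk
  set f : V → ℕ := fun u => min (G.dist v0 u) k with hf
  refine ⟨fun l i => p.getVert (copAux f l.reverse + i.val - 1), ?_, ?_⟩
  · intro h x i
    have hrev : (h ++ [x]).reverse = x :: h.reverse := by simp
    show stepRel G (p.getVert (copAux f h.reverse + i.val - 1))
      (p.getVert (copAux f (h ++ [x]).reverse + i.val - 1))
    rw [hrev]
    show stepRel G (p.getVert (copAux f h.reverse + i.val - 1))
      (p.getVert (mtw (copAux f h.reverse) (f x) + i.val - 1))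
    apply stepVert
    simp only [mtw]
    split_ifs <;> omega
  · intro r hr
    set c : ℕ → ℕ := fun t => copAux f (histList r t).reverse with hc
    have hrec : ∀ t, c (t + 1) = mtw (c t) (f (r t)) := by
      intro t
      have h1 : histList r (t + 1) = histList r t ++ [r t] := by
        simp [histList, List.range_succ]
      simp only [hc, h1, List.reverse_append]
      rfl
    have hfk : ∀ u, f u ≤ k := fun u => min_le_right _ _
    have hflip : ∀ t, f (r (t + 1)) ≤ f (r t) + 1 ∧ f (r t) ≤ f (r (t + 1)) + 1 := by
      intro t
      have := fLip hconn (hr.1 t) v0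
      simp only [hf]
      omega
    set D : ℕ → ℕ := fun t => (c (t + 1) - f (r t)) + (f (r t) - c (t + 1)) with hD
    have harith : ∀ a b b' : ℕ, b ≤ k → b' ≤ k → b' ≤ b + 1 → b ≤ b' + 1 →
        ((mtw a b' - b') + (b' - mtw a b') ≤ (a - b) + (b - a)) ∧
        (0 < (a - b) + (b - a) →
          ((mtw a b' - b') + (b' - mtw a b') < (a - b) + (b - a)) ∨
          ((mtw a b' - b') + (b' - mtw a b') = (a - b) + (b - a) ∧
            (if mtw a b' ≤ b' then k - b' else b') < (if a ≤ b then k - b else b))) := by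
      intro a b b' h1 h2 h3 h4
      simp only [mtw]
      split_ifs <;> omega
    have hDmono : ∀ t, D (t + 1) ≤ D t := by
      intro t
      have h := (harith (c (t + 1)) (f (r t)) (f (r (t + 1))) (hfk _) (hfk _)
        (hflip t).1 (hflip t).2).1
      simp only [hD]
      rw [hrec (t + 1)]
      exact h
    set Psi : ℕ → ℕ := fun t =>
      D t * (k + 2) + (if c (t + 1) ≤ f (r t) then k - f (r t) else f (r t)) with hPsi
    have hPsiLt : ∀ t, 0 < D t → Psi (t + 1) < Psi t := by
      intro t ht
      have ht' : 0 < (c (t + 1) - f (r t)) + (f (r t) - c (t + 1)) := by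
        simp only [hD] at ht; exact ht
      have h := (harith (c (t + 1)) (f (r t)) (f (r (t + 1))) (hfk _) (hfk _)
        (hflip t).1 (hflip t).2).2 ht'
      have hs' : (if mtw (c (t + 1)) (f (r (t + 1))) ≤ f (r (t + 1))
          then k - f (r (t + 1)) else f (r (t + 1))) ≤ k := by
        split_ifs <;> [omega; exact hfk _]
      simp only [hPsi, hD]
      rw [hrec (t + 1)]
      exact psi_lt h hs'
    have hex : ∃ T, D T = 0 := by
      by_contra hno
      push_neg at hno
      have key : ∀ n, Psi n + n ≤ Psi 0 := by
        intro n
        induction n with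
        | zero => omega
        | succ m ih =>
          have := hPsiLt m (Nat.pos_of_ne_zero (hno m))
          omega
      have := key (Psi 0 + 1)
      omega
    obtain ⟨T0, hT0⟩ := hex
    have hzero : ∀ t, T0 ≤ t → D t = 0 := by
      intro t ht
      induction t, ht using Nat.le_induction with
      | base => exact hT0
      | succ n hn ih => have := hDmono n; omega
    refine ⟨T0 + 1, ?_⟩
    intro t ht hmem
    obtain ⟨s, rfl⟩ : ∃ s, t = s + 1 := ⟨t - 1, by omega⟩
    have hDs : D s = 0 := hzero s (by omega)
    obtain ⟨j, hj, hjle⟩ := SimpleGraph.Walk.mem_support_iff_exists_getVert.mp hmem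
    have hdj : G.dist v0 (p.getVert j) = j := getVert_dist hconn p hgeo j hjle
    have hfj : f (r (s + 1)) = j := by
      simp only [hf]
      rw [← hj, hdj]
      exact min_eq_left hjle
    have hcf : c (s + 1) = f (r s) := by
      simp only [hD] at hDs; omega
    have hnear := hflip s
    have hex3 : ∃ m, m < 3 ∧ c (s + 1) + m - 1 = j :=
      ⟨j + 1 - c (s + 1), by omega, by omega⟩
    obtain ⟨m, hm3, hmj⟩ := hex3
    have hne := hr.2 (s + 1) ⟨m, hm3⟩
    simp only at hne
    have hcc : c (s + 1) = copAux f (histList r (s + 1)).reverse := rfl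
    rw [← hcc] at hne
    exact hne (by rw [hmj, hj])
end

section
/- Let G be a finite connected simple graph and let P = (v_0, …, v_k) be a path in G that is geodesically closed with respect to G (hence P is itself a geodesic path). In the game of Surrounding Cops and Robbers on G, two cops have a strategy such that, against every robber play, after a finite number of moves the robber never again occupies a vertex of P. -/
/-- A path `p` in `G` is geodesically closed with respect to `G` if for all vertices
`u, v` of `p`, every geodesic `(u,v)`-path in `G` is a subgraph of `p`
(all its vertices and edges belong to `p`). -/
def GeodesicallyClosedPath {V : Type*} (G : SimpleGraph V) {v0 vk : V}
    (p : G.Walk v0 vk) : Prop :=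
  ∀ u v : V, u ∈ p.support → v ∈ p.support →
    ∀ q : G.Walk u v, q.IsPath → q.length = G.dist u v →
      (∀ x ∈ q.support, x ∈ p.support) ∧ ∀ e ∈ q.edges, e ∈ p.edges

/-! ### Auxiliary material for the proof -/


namespace SCRAux

variable {V : Type*} {G : SimpleGraph V}

lemma getVert_mem_support {u v : V} (q : G.Walk u v) (i : ℕ) : q.getVert i ∈ q.support := by
  rcases le_or_gt i q.length with h | h
  · exact SimpleGraph.Walk.mem_support_iff_exists_getVert.mpr ⟨i, rfl, h⟩
  · rw [q.getVert_of_length_le h.le]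
    exact q.end_mem_support

lemma getVert_injOn {u v : V} (q : G.Walk u v) (hq : q.IsPath) :
    ∀ i, i ≤ q.length → ∀ j, j ≤ q.length → q.getVert i = q.getVert j → i = j := by
  induction q with
  | nil => intro i hi j hj _; simp at hi hj; omega
  | cons h q ih =>
    intro i hi j hj hij
    rw [SimpleGraph.Walk.cons_isPath_iff] at hq
    match i, j with
    | 0, 0 => rfl
    | 0, (j+1) =>
      exfalso
      rw [SimpleGraph.Walk.getVert_zero, SimpleGraph.Walk.getVert_cons_succ] at hij
      exact hq.2 (hij ▸ getVert_mem_support q j)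
    | (i+1), 0 =>
      exfalso
      rw [SimpleGraph.Walk.getVert_zero, SimpleGraph.Walk.getVert_cons_succ] at hij
      exact hq.2 (hij ▸ getVert_mem_support q i)
    | (i+1), (j+1) =>
      rw [SimpleGraph.Walk.getVert_cons_succ, SimpleGraph.Walk.getVert_cons_succ] at hij
      simp only [SimpleGraph.Walk.length_cons] at hi hj
      have := ih hq.1 i (by omega) j (by omega) hij
      omega

lemma exists_index_of_mem_edges {u v : V} (q : G.Walk u v) {e : Sym2 V} (he : e ∈ q.edges) :
    ∃ i, i + 1 ≤ q.length ∧ e = s(q.getVert i, q.getVert (i+1)) := by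
  induction q with
  | nil => simp at he
  | cons h q ih =>
    rw [SimpleGraph.Walk.edges_cons] at he
    rcases List.mem_cons.mp he with h1 | h2
    · exact ⟨0, by simp [SimpleGraph.Walk.length_cons], by
        simpa [SimpleGraph.Walk.getVert_zero, SimpleGraph.Walk.getVert_cons_succ] using h1⟩
    · obtain ⟨i, hi, hei⟩ := ih h2
      exact ⟨i + 1, by simp [SimpleGraph.Walk.length_cons]; omega, by
        simpa [SimpleGraph.Walk.getVert_cons_succ] using hei⟩

lemma dist_getVert_le (hconn : G.Connected) {x y : V} (q : G.Walk x y) (n : ℕ) :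
    G.dist x (q.getVert n) ≤ n := by
  induction q generalizing n with
  | nil =>
    rw [SimpleGraph.Walk.getVert_of_length_le _ (by simp), SimpleGraph.dist_self]
    omega
  | cons h q ih =>
    match n with
    | 0 => simp
    | (n+1) =>
      rw [SimpleGraph.Walk.getVert_cons_succ]
      calc G.dist _ _ ≤ G.dist _ _ + G.dist _ _ := hconn.dist_triangle
        _ ≤ 1 + n := by
            have h1 : G.dist _ _ ≤ (SimpleGraph.Walk.cons h SimpleGraph.Walk.nil).length :=
              SimpleGraph.dist_le _
            simp at h1
            exact Nat.add_le_add h1 (ih n)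
        _ ≤ n + 1 := by omega

/-- Move `c` one step toward `t`. -/
def toward (c t : ℕ) : ℕ := if c < t then c + 1 else if t < c then c - 1 else c

/-- The cop index determined by a (reversed) history of robber positions:
start at `0` and move one step toward the shadow of each successive robber position. -/
def copSeq (sh : V → ℕ) : List V → ℕ
  | [] => 0
  | x :: l => toward (copSeq sh l) (sh x)

lemma copSeq_le {k : ℕ} {sh : V → ℕ} (hsh : ∀ x, sh x ≤ k) :
    ∀ l : List V, copSeq sh l ≤ k := by
  intro l
  induction l with
  | nil => simp [copSeq]
  | cons x l ih =>
    have := hsh x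
    simp only [copSeq]
    unfold toward
    split_ifs <;> omega

lemma stepRel_toward {v0 vk : V} (p : G.Walk v0 vk) (c t : ℕ)
    (hc : c ≤ p.length) (ht : t ≤ p.length) :
    stepRel G (p.getVert c) (p.getVert (toward c t)) := by
  unfold toward
  split_ifs with h1 h2
  · exact Or.inr (p.adj_getVert_succ (by omega))
  · have hc1 : c - 1 + 1 = c := by omega
    have hadj := p.adj_getVert_succ (show c - 1 < p.length by omega)
    rw [hc1] at hadj
    exact Or.inr hadj.symm
  · exact Or.inl rfl

lemma catch_lemma (k : ℕ) (s c : ℕ → ℕ) (hs : ∀ t, s t ≤ k)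
    (hlip : ∀ t, s (t+1) ≤ s t + 1 ∧ s t ≤ s (t+1) + 1)
    (hc0 : c 0 = 0) (hcs : ∀ t, c (t+1) = toward (c t) (s t)) :
    ∃ T, ∀ t, T ≤ t → c (t+1) = s t := by
  have hJ : ∀ t, c (t+1) ≤ s t := by
    intro t
    induction t with
    | zero => rw [hcs 0, hc0]; unfold toward; split_ifs <;> omega
    | succ n ih =>
      have := (hlip n).2
      rw [hcs (n+1)]; unfold toward; split_ifs <;> omega
  have hprop : ∀ t, c (t+1) = s t → c (t+2) = s (t+1) := by
    intro t ht
    have h1 := (hlip t).1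
    have h2 := (hlip t).2
    rw [hcs (t+1), ht]; unfold toward; split_ifs <;> omega
  set Φ : ℕ → ℕ := fun t => 2 * (s t - c (t+1)) + (k - s t) with hΦ
  have hprog : ∀ t, c (t+1) = s t ∨ Φ (t+1) < Φ t := by
    intro t
    have hJ1 := hJ t
    have hJ2 := hJ (t+1)
    have h1 := (hlip t).1
    have h2 := (hlip t).2
    have hs1 := hs t
    have hs2 := hs (t+1)
    have hc2 := hcs (t+1)
    rw [hΦ]
    simp only
    rw [hc2]
    unfold toward; split_ifs <;> omega
  have hex : ∃ t, c (t+1) = s t := by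
    by_contra hE
    push_neg at hE
    have hdec : ∀ n, Φ n + n ≤ Φ 0 := by
      intro n
      induction n with
      | zero => omega
      | succ m ih =>
        rcases hprog m with h | h
        · exact absurd h (hE m)
        · omega
    have := hdec (Φ 0 + 1)
    omega
  obtain ⟨t0, ht0⟩ := hex
  refine ⟨t0, fun t ht => ?_⟩
  induction t, ht using Nat.le_induction with
  | base => exact ht0
  | succ n hn ih => exact hprop n ih

end SCRAux

namespace SCRAux

variable {V : Type*} {G : SimpleGraph V} {v0 vk : V} {p : G.Walk v0 vk}

lemma dist_vtx_le (hconn : G.Connected) (p : G.Walk v0 vk) :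
    ∀ i j : ℕ, i ≤ j → j ≤ p.length → G.dist (p.getVert i) (p.getVert j) ≤ j - i := by
  intro i j hij hj
  induction j, hij using Nat.le_induction with
  | base => simp
  | succ n hn ih =>
    have hadj : G.Adj (p.getVert n) (p.getVert (n+1)) := p.adj_getVert_succ (by omega)
    have h1 : G.dist (p.getVert n) (p.getVert (n+1)) ≤ 1 := by
      have := SimpleGraph.dist_le (SimpleGraph.Walk.cons hadj SimpleGraph.Walk.nil)
      simpa using this
    calc G.dist (p.getVert i) (p.getVert (n+1))
        ≤ G.dist (p.getVert i) (p.getVert n) + G.dist (p.getVert n) (p.getVert (n+1)) :=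
          hconn.dist_triangle
      _ ≤ (n - i) + 1 := Nat.add_le_add (ih (by omega)) h1
      _ ≤ (n + 1) - i := by omega

lemma walk_in_path_length (hpath : p.IsPath) :
    ∀ {x y : V} (q : G.Walk x y), (∀ e ∈ q.edges, e ∈ p.edges) →
      ∀ i j : ℕ, i ≤ p.length → j ≤ p.length → x = p.getVert i → y = p.getVert j →
        (i - j) + (j - i) ≤ q.length := by
  intro x y q
  induction q with
  | nil =>
    intro _ i j hi hj hx hy
    have : i = j := getVert_injOn p hpath i hi j hj (hx ▸ hy ▸ rfl)
    omega
  | cons hadj q ih =>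
    rename_i a b c
    intro hsub i j hi hj hx hy
    have he : s(a, b) ∈ p.edges := hsub _ (by simp [SimpleGraph.Walk.edges_cons])
    obtain ⟨m, hm, hme⟩ := exists_index_of_mem_edges p he
    rw [Sym2.eq_iff] at hme
    rcases hme with ⟨ha, hb⟩ | ⟨ha, hb⟩
    · have hia : i = m := getVert_injOn p hpath i hi m (by omega) (hx ▸ ha ▸ rfl)
      have := ih (fun e hee => hsub e
          (by rw [SimpleGraph.Walk.edges_cons]; exact List.mem_cons_of_mem _ hee))
        (m+1) j (by omega) hj hb hy
      simp only [SimpleGraph.Walk.length_cons]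
      omega
    · have hia : i = m + 1 := getVert_injOn p hpath i hi (m+1) (by omega) (hx ▸ ha ▸ rfl)
      have := ih (fun e hee => hsub e
          (by rw [SimpleGraph.Walk.edges_cons]; exact List.mem_cons_of_mem _ hee))
        m j (by omega) hj hb hy
      simp only [SimpleGraph.Walk.length_cons]
      omega

lemma dist_vtx (hconn : G.Connected) (hpath : p.IsPath) (hclosed : GeodesicallyClosedPath G p) :
    ∀ i j : ℕ, i ≤ p.length → j ≤ p.length →
      G.dist (p.getVert i) (p.getVert j) = (i - j) + (j - i) := by
  intro i j hi hj
  have hle : G.dist (p.getVert i) (p.getVert j) ≤ (i - j) + (j - i) := by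
    rcases le_total i j with h | h
    · have := dist_vtx_le hconn p i j h hj; omega
    · have := dist_vtx_le hconn p j i h hi
      rw [SimpleGraph.dist_comm]
      omega
  have hge : (i - j) + (j - i) ≤ G.dist (p.getVert i) (p.getVert j) := by
    obtain ⟨q, hq, hlen⟩ := hconn.exists_path_of_dist (p.getVert i) (p.getVert j)
    have hsub := (hclosed _ _ (getVert_mem_support p i) (getVert_mem_support p j) q hq hlen).2
    have := walk_in_path_length hpath q hsub i j hi hj rfl rfl
    omega
  omega

lemma dist_v0_vtx (hconn : G.Connected) (hpath : p.IsPath)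
    (hclosed : GeodesicallyClosedPath G p) :
    ∀ i : ℕ, i ≤ p.length → G.dist v0 (p.getVert i) = i := by
  intro i hi
  have := dist_vtx hconn hpath hclosed 0 i (by omega) hi
  rw [p.getVert_zero] at this
  omega

lemma close_off_path (hconn : G.Connected) (hpath : p.IsPath)
    (hclosed : GeodesicallyClosedPath G p) {u : V} {j : ℕ} (hj : j ≤ p.length)
    (hu : u ∉ p.support) (hadj : G.Adj u (p.getVert j)) :
    G.dist v0 u = j ∨ G.dist v0 u = j + 1 := by
  have hdj : G.dist v0 (p.getVert j) = j := dist_v0_vtx hconn hpath hclosed j hj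
  have h1 : G.dist u (p.getVert j) ≤ 1 := by
    have := SimpleGraph.dist_le (SimpleGraph.Walk.cons hadj SimpleGraph.Walk.nil)
    simpa using this
  have hub : G.dist v0 u ≤ j + 1 := by
    calc G.dist v0 u ≤ G.dist v0 (p.getVert j) + G.dist (p.getVert j) u := hconn.dist_triangle
      _ ≤ j + 1 := by rw [hdj, SimpleGraph.dist_comm]; omega
  have hlb : j ≤ G.dist v0 u + 1 := by
    calc j = G.dist v0 (p.getVert j) := hdj.symm
      _ ≤ G.dist v0 u + G.dist u (p.getVert j) := hconn.dist_triangle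
      _ ≤ G.dist v0 u + 1 := by omega
  rcases Nat.lt_or_ge (G.dist v0 u) j with hlt | hge
  · exfalso
    have hdu : G.dist v0 u + 1 = j := by omega
    obtain ⟨q, hq, hlen⟩ := hconn.exists_path_of_dist v0 u
    have hnotmem : p.getVert j ∉ q.support := by
      intro hmem
      obtain ⟨n, hn, hnle⟩ := SimpleGraph.Walk.mem_support_iff_exists_getVert.mp hmem
      have := dist_getVert_le hconn q n
      rw [hn, hdj] at this
      omega
    have hq' : (q.concat hadj).IsPath := by
      rw [SimpleGraph.Walk.isPath_def, SimpleGraph.Walk.support_concat]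
      rw [List.nodup_append]
      refine ⟨hq.support_nodup, List.nodup_singleton _, ?_⟩
      intro x hx b hx' hxb
      simp at hx'
      exact hnotmem (hx' ▸ hxb ▸ hx)
    have hlen' : (q.concat hadj).length = G.dist v0 (p.getVert j) := by
      rw [SimpleGraph.Walk.length_concat, hlen, hdj, hdu]
    have hsup := (hclosed _ _ p.start_mem_support (getVert_mem_support p j)
      (q.concat hadj) hq' hlen').1
    exact hu (hsup u (by
      rw [SimpleGraph.Walk.support_concat]
      exact List.mem_append_left _ q.end_mem_support))
  · omega

end SCRAux

/-- Let `G` be a finite connected simple graph and let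
`P = (v_0, …, v_k)` be a path in `G` that is geodesically closed with respect to `G`
(hence `P` is itself a geodesic path).  In the game of Surrounding Cops and Robbers
on `G`, two cops have a strategy such that, against every robber play, after a
finite number of moves the robber never again occupies a vertex of `P`. -/
theorem two_cops_guard_geodesically_closed {V : Type*} [Fintype V] (G : SimpleGraph V)
    (hconn : G.Connected) {v0 vk : V} (p : G.Walk v0 vk) (hpath : p.IsPath)
    (hclosed : GeodesicallyClosedPath G p) :
    ∃ F : List V → Fin 2 → V, ValidCopStrategy G F ∧
      ∀ r : ℕ → V, LegalPlay G F r →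
        ∃ T : ℕ, ∀ t, T ≤ t → r t ∉ p.support := by
  classical

  set k := p.length with hk
  set d : V → ℕ := fun u => G.dist v0 u with hd
  set sA : V → ℕ := fun u => min (d u) k with hsA
  set sB : V → ℕ := fun u => min (d u) k - 1 with hsB
  have hsAle : ∀ x, sA x ≤ k := by intro x; simp only [hsA]; omega
  have hsBle : ∀ x, sB x ≤ k := by intro x; simp only [hsB]; omega
  refine ⟨fun h i => p.getVert
    (if (i : ℕ) = 0 then SCRAux.copSeq sA h.reverse else SCRAux.copSeq sB h.reverse), ?_, ?_⟩
  · -- validity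
    intro h x i
    simp only [List.reverse_append, List.reverse_cons, List.reverse_nil, List.nil_append,
      List.singleton_append]
    split_ifs
    · exact SCRAux.stepRel_toward p _ _ (SCRAux.copSeq_le hsAle _) (hsAle x)
    · exact SCRAux.stepRel_toward p _ _ (SCRAux.copSeq_le hsBle _) (hsBle x)
  · intro r hleg
    obtain ⟨hstep, havoid⟩ := hleg
    set cA : ℕ → ℕ := fun t => SCRAux.copSeq sA (histList r t).reverse with hcAdef
    set cB : ℕ → ℕ := fun t => SCRAux.copSeq sB (histList r t).reverse with hcBdef
    have hhist : ∀ t, (histList r (t+1)).reverse = r t :: (histList r t).reverse := by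
      intro t
      simp [histList, List.range_succ]
    have hcA : ∀ t, cA (t+1) = SCRAux.toward (cA t) (sA (r t)) := by
      intro t
      rw [hcAdef]
      simp only
      rw [hhist t]
      rfl
    have hcB : ∀ t, cB (t+1) = SCRAux.toward (cB t) (sB (r t)) := by
      intro t
      rw [hcBdef]
      simp only
      rw [hhist t]
      rfl
    have hcA0 : cA 0 = 0 := by simp [hcAdef, histList, SCRAux.copSeq]
    have hcB0 : cB 0 = 0 := by simp [hcBdef, histList, SCRAux.copSeq]
    -- Lipschitz property of the distance to v0 along the robber's walk
    have hdlip : ∀ t, d (r (t+1)) ≤ d (r t) + 1 ∧ d (r t) ≤ d (r (t+1)) + 1 := by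
      intro t
      rcases hstep t with he | ha
      · rw [he]; omega
      · have h1 : G.dist (r t) (r (t+1)) ≤ 1 := by
          have := SimpleGraph.dist_le (SimpleGraph.Walk.cons ha SimpleGraph.Walk.nil)
          simpa using this
        have h2 : G.dist (r (t+1)) (r t) ≤ 1 := by rwa [SimpleGraph.dist_comm]
        constructor
        · calc d (r (t+1)) ≤ G.dist v0 (r t) + G.dist (r t) (r (t+1)) := hconn.dist_triangle
            _ ≤ d (r t) + 1 := by simp only [hd]; omega
        · calc d (r t) ≤ G.dist v0 (r (t+1)) + G.dist (r (t+1)) (r t) := hconn.dist_triangle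
            _ ≤ d (r (t+1)) + 1 := by simp only [hd]; omega
    have hsAlip : ∀ t, sA (r (t+1)) ≤ sA (r t) + 1 ∧ sA (r t) ≤ sA (r (t+1)) + 1 := by
      intro t
      have := hdlip t
      simp only [hsA]
      omega
    have hsBlip : ∀ t, sB (r (t+1)) ≤ sB (r t) + 1 ∧ sB (r t) ≤ sB (r (t+1)) + 1 := by
      intro t
      have := hdlip t
      simp only [hsB]
      omega
    obtain ⟨TA, hTA⟩ := SCRAux.catch_lemma k (fun t => sA (r t)) cA (fun t => hsAle _)
      hsAlip hcA0 hcA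
    obtain ⟨TB, hTB⟩ := SCRAux.catch_lemma k (fun t => sB (r t)) cB (fun t => hsBle _)
      hsBlip hcB0 hcB
    set T0 := max TA TB with hT0
    -- the two cops' positions after the robber's move at time t ≥ T0
    have hposA : ∀ t, T0 ≤ t → p.getVert (sA (r t)) ≠ r (t+1) := by
      intro t ht
      have h0 := havoid (t+1) 0
      simp only [Fin.val_zero, if_pos rfl] at h0
      rw [← hTA t (le_trans (le_max_left _ _) ht)]
      exact h0
    have hposB : ∀ t, T0 ≤ t → p.getVert (sB (r t)) ≠ r (t+1) := by
      intro t ht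
      have h1 := havoid (t+1) 1
      simp only [Fin.val_one, if_neg one_ne_zero] at h1
      rw [← hTB t (le_trans (le_max_right _ _) ht)]
      exact h1
    -- key step lemma
    have hS : ∀ t, T0 ≤ t → ∀ j, j ≤ k → r (t+1) = p.getVert j →
        ∃ i, i + 1 ≤ k ∧ r t = p.getVert i ∧ j = i + 1 := by
      intro t ht j hj hrj
      by_cases hmem : r t ∈ p.support
      · obtain ⟨i, hri, hik⟩ := SimpleGraph.Walk.mem_support_iff_exists_getVert.mp hmem
        have hdi : d (r t) = i := by
          rw [hd]
          simp only
          rw [← hri]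
          exact SCRAux.dist_v0_vtx hconn hpath hclosed i hik
        have hsAi : sA (r t) = i := by simp only [hsA, hdi]; omega
        have hsBi : sB (r t) = i - 1 := by simp only [hsB, hdi]; omega
        have hji : j ≠ i := by
          intro hh
          exact hposA t ht (by rw [hsAi, ← hh, ← hrj])
        rcases hstep t with he | hadj
        · exfalso
          apply hji
          exact SCRAux.getVert_injOn p hpath j hj i hik (by rw [← hrj, ← he, hri])
        · have hadj' : G.Adj (p.getVert i) (p.getVert j) := by
            rw [hri, ← hrj] at *
            exact hadj
          have hdist := SCRAux.dist_vtx hconn hpath hclosed i j hik hj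
          have hd1 : G.dist (p.getVert i) (p.getVert j) = 1 := by
            have hle : G.dist (p.getVert i) (p.getVert j) ≤ 1 := by
              have := SimpleGraph.dist_le (SimpleGraph.Walk.cons hadj' SimpleGraph.Walk.nil)
              simpa using this
            have hne : G.dist (p.getVert i) (p.getVert j) ≠ 0 := by
              intro h0
              exact hadj'.ne ((hconn.dist_eq_zero_iff).mp h0)
            omega
          have hone : (i - j) + (j - i) = 1 := by omega
          rcases Nat.lt_or_ge i j with hij | hij
          · -- j = i + 1
            exact ⟨i, by omega, hri.symm, by omega⟩
          · -- j = i - 1, blocked by cop B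
            exfalso
            have : j = i - 1 := by omega
            exact hposB t ht (by rw [hsBi, ← this, ← hrj])
      · exfalso
        rcases hstep t with he | hadj
        · exact hmem (by rw [he, hrj]; exact SCRAux.getVert_mem_support p j)
        · have hadj' : G.Adj (r t) (p.getVert j) := by rwa [hrj] at hadj
          rcases SCRAux.close_off_path hconn hpath hclosed hj hmem hadj' with hdd | hdd
          · have hsAj : sA (r t) = j := by
              simp only [hsA, hd] at *
              omega
            exact hposA t ht (by rw [hsAj, ← hrj])
          · rcases Nat.lt_or_ge j k with hjk | hjk
            · have hsBj : sB (r t) = j := by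
                simp only [hsB, hd] at *
                omega
              exact hposB t ht (by rw [hsBj, ← hrj])
            · have hjk' : j = k := by omega
              have hsAj : sA (r t) = j := by
                simp only [hsA, hd] at *
                omega
              exact hposA t ht (by rw [hsAj, ← hrj])
    -- the escape induction
    have hM : ∀ m t, T0 ≤ t → (∀ i, i ≤ k → r t = p.getVert i → k < i + m) →
        r (t + m) ∉ p.support := by
      intro m
      induction m with
      | zero =>
        intro t ht hcond hmem
        obtain ⟨i, hri, hik⟩ := SimpleGraph.Walk.mem_support_iff_exists_getVert.mp hmem
        have := hcond i hik hri.symm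
        omega
      | succ m ih =>
        intro t ht hcond
        rw [show t + (m+1) = (t+1) + m by omega]
        apply ih (t+1) (by omega)
        intro i hi hri
        obtain ⟨i', hi', hri', hii'⟩ := hS t ht i hi hri
        have := hcond i' (by omega) hri'
        omega
    refine ⟨T0 + (k + 1), fun t ht => ?_⟩
    have := hM (t - T0) T0 le_rfl (by intro i hi _; omega)
    rwa [show T0 + (t - T0) = t by omega] at this
end

section
/- Let G be a finite connected bipartite simple graph and let P = (v_0, …, v_k) be a path in G that is geodesically closed with respect to G. In the game of Surrounding Cops and Robbers on G, a single cop has a strategy such that, against every robber play, after a finite number of moves the robber is unable to enter P from outside of P: from some time onward, whenever the robber does not occupy a vertex of P, his next move cannot be to a vertex of P. -/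
open SimpleGraph Walk


section Aux
variable {V : Type*} {G : SimpleGraph V}

lemma aux_getVert_mem {u v : V} (p : G.Walk u v) {n : ℕ} (hn : n ≤ p.length) :
    p.getVert n ∈ p.support :=
  Walk.mem_support_iff_exists_getVert.mpr ⟨n, rfl, hn⟩

lemma aux_getVert_inj {v0 vk : V} {p : G.Walk v0 vk} (hp : p.IsPath) :
    ∀ {i j : ℕ}, i ≤ p.length → j ≤ p.length → p.getVert i = p.getVert j → i = j := by
  induction p with
  | nil => intro i j hi hj _; simp [Walk.length_nil] at hi hj; omega
  | @cons u a b h q ih =>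
    rw [Walk.cons_isPath_iff] at hp
    intro i j hi hj heq
    match i, j with
    | 0, 0 => rfl
    | 0, j+1 =>
      exfalso
      apply hp.2
      rw [Walk.getVert_zero, Walk.getVert_cons_succ] at heq
      rw [heq]
      exact aux_getVert_mem q (by simpa using hj)
    | i+1, 0 =>
      exfalso
      apply hp.2
      rw [Walk.getVert_zero, Walk.getVert_cons_succ] at heq
      rw [← heq]
      exact aux_getVert_mem q (by simpa using hi)
    | i+1, j+1 =>
      simp only [Walk.getVert_cons_succ] at heq
      have := ih hp.1 (by simpa using hi) (by simpa using hj) heq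
      omega

lemma aux_edge_mem {v0 vk : V} (p : G.Walk v0 vk) {e : Sym2 V} (he : e ∈ p.edges) :
    ∃ m, m < p.length ∧ e = s(p.getVert m, p.getVert (m+1)) := by
  induction p with
  | nil => simp at he
  | @cons u a b h q ih =>
    rw [Walk.edges_cons, List.mem_cons] at he
    rcases he with he | he
    · exact ⟨0, by simp, by simpa using he⟩
    · obtain ⟨m, hm, hme⟩ := ih he
      exact ⟨m + 1, by simpa using hm, by simpa using hme⟩

/-- A walk whose edges all lie in the path `p` cannot move indices faster than 1 per step. -/
lemma aux_walk_in_path {v0 vk : V} {p : G.Walk v0 vk} (hp : p.IsPath) :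
    ∀ {a b : V} (w : G.Walk a b), (∀ e ∈ w.edges, e ∈ p.edges) →
      ∀ i j, i ≤ p.length → j ≤ p.length → p.getVert i = a → p.getVert j = b →
        j ≤ i + w.length := by
  intro a b w
  induction w with
  | nil =>
    intro _ i j hi hj ha hb
    have : i = j := aux_getVert_inj hp hi hj (ha.trans hb.symm)
    simpa using this.ge
  | @cons a c b h q ih =>
    intro hsub i j hi hj ha hb
    have hmem : s(a, c) ∈ p.edges := hsub _ (by simp)
    obtain ⟨m, hm, hme⟩ := aux_edge_mem p hmem
    have hc : ∃ m', m' ≤ p.length ∧ m' ≤ i + 1 ∧ p.getVert m' = c := by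
      rw [Sym2.eq_iff] at hme
      rcases hme with ⟨h1, h2⟩ | ⟨h1, h2⟩
      · have : i = m := aux_getVert_inj hp hi (le_of_lt hm) (ha.trans h1)
        exact ⟨m + 1, by omega, by omega, h2.symm⟩
      · have : i = m + 1 := aux_getVert_inj hp hi (by omega) (ha.trans h1)
        exact ⟨m, by omega, by omega, h2.symm⟩
    obtain ⟨m', hm'le, hm'i, hm'c⟩ := hc
    have := ih (fun e he => hsub e (by simp [he])) m' j hm'le hj hm'c hb
    simp only [Walk.length_cons]
    omega

end Aux

section Aux2
variable {V : Type*} {G : SimpleGraph V}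

lemma aux_walk_parity (C : G.Coloring (Fin 2)) :
    ∀ {a b : V} (w : G.Walk a b), (C a = C b ↔ Even w.length) := by
  intro a b w
  induction w with
  | nil => simp
  | @cons a c b h q ih =>
    have hne : C a ≠ C c := C.valid h
    have key : ∀ x y z : Fin 2, x ≠ y → (x = z ↔ ¬ y = z) := by decide
    rw [Walk.length_cons, Nat.even_add_one, ← ih]
    exact key _ _ _ hne

lemma aux_dist_adj_ne (hconn : G.Connected) (hbip : G.Colorable 2) {v0 x y : V}
    (h : G.Adj x y) : G.dist v0 x ≠ G.dist v0 y := by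
  obtain ⟨C⟩ := hbip
  obtain ⟨wx, hwx⟩ := hconn.exists_walk_length_eq_dist v0 x
  obtain ⟨wy, hwy⟩ := hconn.exists_walk_length_eq_dist v0 y
  intro hd
  have h1 := aux_walk_parity C wx
  have h2 := aux_walk_parity C wy
  rw [hwx] at h1; rw [hwy] at h2
  rw [hd] at h1
  have : C x = C y := by
    have key : ∀ a b c : Fin 2, (a = b ↔ a = c) → b = c := by decide
    exact key _ _ _ (h1.trans h2.symm)
  exact C.valid h this

lemma aux_dist_adj_le {x y : V} (hconn : G.Connected) (h : G.Adj x y) (v0 : V) :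
    G.dist v0 y ≤ G.dist v0 x + 1 := by
  have := hconn.dist_triangle (u := v0) (v := x) (w := y)
  rwa [SimpleGraph.dist_eq_one_iff_adj.mpr h] at this

lemma aux_dist_step (hconn : G.Connected) {x y : V} (h : x = y ∨ G.Adj x y) (v0 : V) :
    G.dist v0 y ≤ G.dist v0 x + 1 ∧ G.dist v0 x ≤ G.dist v0 y + 1 := by
  rcases h with rfl | h
  · omega
  · exact ⟨aux_dist_adj_le hconn h v0, aux_dist_adj_le hconn h.symm v0⟩

end Aux2

section Aux3
variable {V : Type*} {G : SimpleGraph V} {v0 vk : V} {p : G.Walk v0 vk}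

lemma aux_dist_getVert (hconn : G.Connected) (hpath : p.IsPath)
    (hclosed : GeodesicallyClosedPath G p) {i : ℕ} (hi : i ≤ p.length) :
    G.dist v0 (p.getVert i) = i := by
  have hub : ∀ j, j ≤ p.length → G.dist v0 (p.getVert j) ≤ j := by
    intro j
    induction j with
    | zero => intro _; simp [Walk.getVert_zero]
    | succ n ih =>
      intro hn
      have h1 := ih (by omega)
      have h2 : G.Adj (p.getVert n) (p.getVert (n+1)) := p.adj_getVert_succ (by omega)
      have := aux_dist_adj_le hconn h2 v0
      omega
  refine le_antisymm (hub i hi) ?_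
  obtain ⟨q, hq, hqlen⟩ := hconn.exists_path_of_dist v0 (p.getVert i)
  have hcl := hclosed v0 (p.getVert i) (by simpa using aux_getVert_mem p (Nat.zero_le _))
    (aux_getVert_mem p hi) q hq hqlen
  have := aux_walk_in_path hpath q hcl.2 0 i (Nat.zero_le _) hi (Walk.getVert_zero p) rfl
  omega

/-- Entry lemma: a vertex outside the path adjacent to `getVert i` has distance `i+1` from `v0`. -/
lemma aux_entry (hconn : G.Connected) (hbip : G.Colorable 2) (hpath : p.IsPath)
    (hclosed : GeodesicallyClosedPath G p) {x : V} (hx : x ∉ p.support)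
    {i : ℕ} (hi : i ≤ p.length) (hadj : G.Adj x (p.getVert i)) :
    G.dist v0 x = i + 1 := by
  classical
  have hdi : G.dist v0 (p.getVert i) = i := aux_dist_getVert hconn hpath hclosed hi
  have hne : G.dist v0 x ≠ i := by
    have := aux_dist_adj_ne hconn hbip (v0 := v0) hadj
    omega
  have hstep := aux_dist_step hconn (Or.inr hadj) v0
  rw [hdi] at hstep
  -- so dist v0 x = i - 1 or i + 1; rule out i - 1
  by_contra hcon
  have hge1 : 1 ≤ i := by omega
  have hdx : G.dist v0 x = i - 1 := by omega
  obtain ⟨w, hw, hwlen⟩ := hconn.exists_path_of_dist v0 x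
  -- getVert i is not in w.support
  have hnotin : p.getVert i ∉ w.support := by
    intro hmem
    have := SimpleGraph.dist_le ((w.takeUntil _ hmem))
    have := Walk.length_takeUntil_le w hmem
    omega
  have hw2 : (w.concat hadj).IsPath := by
    rw [← Walk.isPath_reverse_iff, Walk.reverse_concat]
    rw [Walk.cons_isPath_iff]
    refine ⟨(Walk.isPath_reverse_iff w).mpr hw, by simpa using hnotin⟩
  have hw2len : (w.concat hadj).length = G.dist v0 (p.getVert i) := by
    rw [Walk.length_concat, hdi]; omega
  have hcl := hclosed v0 (p.getVert i) (by simpa using aux_getVert_mem p (Nat.zero_le _))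
    (aux_getVert_mem p hi) _ hw2 hw2len
  exact hx (hcl.1 x (by simp [Walk.support_concat]))

end Aux3


/-- Index update: move one step toward `b`. -/
def nextIdx (a b : ℕ) : ℕ := if a < b then a + 1 else if b < a then a - 1 else a

open Classical in
/-- The cop's move: if on the path, move one step (along the path) toward the
"shadow" vertex of index `min (dist v0 x - 1) p.length`; otherwise stay put. -/
noncomputable def cmove {V : Type*} (G : SimpleGraph V) {v0 vk : V} (p : G.Walk v0 vk)
    (q x : V) : V :=
  if q ∈ p.support then
    p.getVert (nextIdx (G.dist v0 q) (min (G.dist v0 x - 1) p.length))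
  else q

section Aux4
variable {V : Type*} {G : SimpleGraph V} {v0 vk : V} {p : G.Walk v0 vk}

lemma cmove_getVert (hconn : G.Connected) (hpath : p.IsPath)
    (hclosed : GeodesicallyClosedPath G p) {a : ℕ} (ha : a ≤ p.length) (x : V) :
    cmove G p (p.getVert a) x = p.getVert (nextIdx a (min (G.dist v0 x - 1) p.length)) := by
  have hmem : p.getVert a ∈ p.support := aux_getVert_mem p ha
  rw [cmove, if_pos hmem, aux_dist_getVert hconn hpath hclosed ha]

lemma cmove_step (hconn : G.Connected) (hpath : p.IsPath)
    (hclosed : GeodesicallyClosedPath G p) (q x : V) :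
    stepRel G q (cmove G p q x) := by
  by_cases hq : q ∈ p.support
  · obtain ⟨n, hgv, hn⟩ := Walk.mem_support_iff_exists_getVert.mp hq
    subst hgv
    rw [cmove_getVert hconn hpath hclosed hn]
    set b := min (G.dist v0 x - 1) p.length with hb
    have hbk : b ≤ p.length := min_le_right _ _
    rw [nextIdx]
    split_ifs with h1 h2
    · exact Or.inr (p.adj_getVert_succ (by omega))
    · refine Or.inr ?_
      have : G.Adj (p.getVert (n - 1)) (p.getVert (n - 1 + 1)) := p.adj_getVert_succ (by omega)
      rw [show n - 1 + 1 = n by omega] at this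
      exact this.symm
    · exact Or.inl rfl
  · rw [cmove, if_neg hq]
    exact Or.inl rfl

end Aux4

/-- Let `G` be a finite connected bipartite simple graph and let
`P = (v_0, …, v_k)` be a path in `G` that is geodesically closed with respect to `G`.
In the game of Surrounding Cops and Robbers on `G`, a single cop has a strategy such
that, against every robber play, after a finite number of moves the robber is unable
to enter `P` from outside of `P`: from some time onward, whenever the robber does not
occupy a vertex of `P`, his next move is not to a vertex of `P`. -/
theorem one_cop_guards_geodesically_closed_bipartite {V : Type*} [Fintype V]
    (G : SimpleGraph V) (hconn : G.Connected) (hbip : G.Colorable 2)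
    {v0 vk : V} (p : G.Walk v0 vk) (hpath : p.IsPath)
    (hclosed : GeodesicallyClosedPath G p) :
    ∃ F : List V → Fin 1 → V, ValidCopStrategy G F ∧
      ∀ r : ℕ → V, LegalPlay G F r →
        ∃ T : ℕ, ∀ t, T ≤ t → r t ∉ p.support → r (t + 1) ∉ p.support := by
  classical
  set k := p.length with hk
  refine ⟨fun h _ => h.foldl (cmove G p) v0, ?_, ?_⟩
  · intro h x i
    show stepRel G (List.foldl (cmove G p) v0 h) (List.foldl (cmove G p) v0 (h ++ [x]))
    rw [List.foldl_append, List.foldl_cons, List.foldl_nil]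
    exact cmove_step hconn hpath hclosed _ x
  · intro r hleg
    set c : ℕ → V := fun t => (histList r t).foldl (cmove G p) v0 with hc
    have hcsucc : ∀ t, c (t + 1) = cmove G p (c t) (r t) := by
      intro t
      have : histList r (t + 1) = histList r t ++ [r t] := by
        simp [histList, List.range_succ]
      simp only [hc, this, List.foldl_append, List.foldl_cons, List.foldl_nil]
    set sh : ℕ → ℕ := fun t => min (G.dist v0 (r t) - 1) k with hsh
    have hshk : ∀ t, sh t ≤ k := fun t => min_le_right _ _
    have hshstep : ∀ t, sh (t + 1) ≤ sh t + 1 ∧ sh t ≤ sh (t + 1) + 1 := by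
      intro t
      have := aux_dist_step hconn (hleg.1 t) v0
      simp only [hsh]
      omega
    have hgv : ∀ t a, a ≤ k → c (t + 1) = p.getVert a →
        c (t + 2) = p.getVert (nextIdx a (sh (t + 1))) := by
      intro t a ha hca
      rw [hcsucc (t + 1), hca, cmove_getVert hconn hpath hclosed ha]
    have hinv : ∀ t, ∃ a, a ≤ sh t ∧ c (t + 1) = p.getVert a := by
      intro t
      induction t with
      | zero =>
        refine ⟨nextIdx 0 (sh 0), ?_, ?_⟩
        · rw [nextIdx]; split_ifs <;> omega
        · rw [hcsucc 0]
          have h0 : c 0 = p.getVert 0 := by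
            simp [hc, histList, Walk.getVert_zero]
          rw [h0, cmove_getVert hconn hpath hclosed (Nat.zero_le _)]
      | succ n ih =>
        obtain ⟨a, ha, hca⟩ := ih
        refine ⟨nextIdx a (sh (n + 1)), ?_, hgv n a (le_trans ha (hshk n)) hca⟩
        have := hshstep n
        rw [nextIdx]; split_ifs <;> omega
    have hpers : ∀ t, c (t + 1) = p.getVert (sh t) → c (t + 2) = p.getVert (sh (t + 1)) := by
      intro t hcap
      rw [hgv t (sh t) (hshk t) hcap]
      congr 1
      have := hshstep t
      rw [nextIdx]; split_ifs <;> omega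
    have hcatch : ∃ T, c (T + 1) = p.getVert (sh T) := by
      by_contra hno
      push_neg at hno
      have key : ∀ t, ∃ a, a ≤ sh t ∧ c (t + 1) = p.getVert a ∧ t ≤ a := by
        intro t
        induction t with
        | zero =>
          obtain ⟨a, ha, hca⟩ := hinv 0
          exact ⟨a, ha, hca, Nat.zero_le _⟩
        | succ n ih =>
          obtain ⟨a, ha, hca, hna⟩ := ih
          have hank : a ≤ k := le_trans ha (hshk n)
          have hane : a ≠ sh n := by
            intro heq
            exact hno n (heq ▸ hca)
          have halt : a < sh n := lt_of_le_of_ne ha hane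
          have hstep := hshstep n
          have hlow : a ≤ sh (n + 1) := by omega
          have hane2 : a ≠ sh (n + 1) := by
            intro heq
            apply hno (n + 1)
            rw [hgv n a hank hca, ← heq]
            congr 1
            rw [nextIdx]; split_ifs <;> omega
          refine ⟨a + 1, by omega, ?_, by omega⟩
          rw [hgv n a hank hca]
          congr 1
          rw [nextIdx]; split_ifs <;> omega
      obtain ⟨a, ha, _, hta⟩ := key (k + 1)
      have := hshk (k + 1)
      omega
    obtain ⟨T, hT⟩ := hcatch
    have hTall : ∀ t, T ≤ t → c (t + 1) = p.getVert (sh t) := by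
      intro t ht
      induction t with
      | zero =>
        have : T = 0 := by omega
        exact this ▸ hT
      | succ n ih =>
        rcases Nat.lt_or_ge T (n + 1) with h | h
        · exact hpers n (ih (by omega))
        · have : T = n + 1 := by omega
          exact this ▸ hT
    refine ⟨T, ?_⟩
    intro t ht hrt hrt1
    obtain ⟨i, higv, hik⟩ := Walk.mem_support_iff_exists_getVert.mp hrt1
    have hadj : G.Adj (r t) (p.getVert i) := by
      rcases hleg.1 t with heq | hadj
      · exact absurd (heq ▸ hrt1) (fun h => hrt h)
      · exact higv ▸ hadj
    have hdist : G.dist v0 (r t) = i + 1 :=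
      aux_entry hconn hbip hpath hclosed hrt hik hadj
    have hsht : sh t = i := by
      simp only [hsh, hdist]
      omega
    apply hleg.2 (t + 1) 0
    show c (t + 1) = r t.succ
    rw [hTall t ht, hsht, higv]
end

section
/- Let G be a finite connected simple graph, let k ≥ 1, and suppose there is a nonempty set S of vertices of G such that every vertex of S has degree at least k + 1 in G and has at least k neighbors belonging to S. Then s(G) ≥ k + 1; that is, k cops do not suffice to surround the robber on G. (This robber strategy underlies the paper's lower bounds: a planar graph with s(G) ≥ 6, a toroidal graph with s(G) ≥ 7, and a bipartite toroidal graph with s(G) ≥ 5.) -/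
/-- Auxiliary: build the robber's history from a "next move given history" function. -/
def buildHist {V : Type*} (step : List V → V) : ℕ → List V
  | 0 => []
  | t + 1 => buildHist step t ++ [step (buildHist step t)]

lemma histList_buildSeq {V : Type*} (step : List V → V) (t : ℕ) :
    histList (fun n => step (buildHist step n)) t = buildHist step t := by
  induction t with
  | zero => rfl
  | succ t ih =>
    simp only [histList, List.range_succ, List.map_append, List.map_cons, List.map_nil,
      buildHist]
    rw [← ih]; rfl

/-- Let `G` be a finite connected simple graph, let `k ≥ 1`, and
suppose there is a nonempty set `S` of vertices of `G` such that every vertex of `S`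
has degree at least `k + 1` in `G` and has at least `k` neighbors belonging to `S`.
Then `s(G) ≥ k + 1`; that is, `k` cops do not suffice to surround the robber on `G`. -/
theorem robber_escapes_on_dense_set {V : Type*} [Fintype V] [DecidableEq V]
    (G : SimpleGraph V) [DecidableRel G.Adj] (hconn : G.Connected)
    (k : ℕ) (hk : 1 ≤ k) (S : Finset V) (hS : S.Nonempty)
    (hdeg : ∀ v ∈ S, k + 1 ≤ G.degree v)
    (hnbr : ∀ v ∈ S, k ≤ (S.filter (fun u => G.Adj v u)).card) :
    ¬ CopsWin G k := by
  classical
  rintro ⟨F, -, hwin⟩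
  obtain ⟨v0, hv0⟩ := hS
  -- from any vertex of S, against any cop placement, the robber has a safe move in S
  have key : ∀ (v : V) (c : Fin k → V), ∃ w, v ∈ S →
      (w ∈ S ∧ stepRel G v w ∧ ∀ i, c i ≠ w) := by
    intro v c
    by_cases hv : v ∈ S
    · set T : Finset V := insert v (S.filter (fun u => G.Adj v u)) with hT
      have hvT : v ∉ S.filter (fun u => G.Adj v u) := by
        simp [G.irrefl]
      have hcardT : k + 1 ≤ T.card := by
        rw [hT, Finset.card_insert_of_notMem hvT]
        exact Nat.add_le_add_right (hnbr v hv) 1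
      have hcimg : (Finset.univ.image c).card ≤ k := by
        refine le_trans Finset.card_image_le ?_
        simp
      obtain ⟨w, hwT, hwc⟩ : ∃ w ∈ T, w ∉ Finset.univ.image c := by
        by_contra h
        push_neg at h
        have := Finset.card_le_card h
        omega
      refine ⟨w, fun _ => ?_⟩
      have hwc' : ∀ i, c i ≠ w := by
        intro i hi
        exact hwc (Finset.mem_image.2 ⟨i, Finset.mem_univ i, hi⟩)
      rcases Finset.mem_insert.1 hwT with h | h
      · exact ⟨h ▸ hv, Or.inl h.symm, hwc'⟩
      · obtain ⟨hwS, hadj⟩ := Finset.mem_filter.1 h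
        exact ⟨hwS, Or.inr hadj, hwc'⟩
    · exact ⟨v0, fun h => absurd h hv⟩
  choose pick hpick using key
  -- the robber's strategy
  set step : List V → V := fun h => pick (h.getLastD v0) (F h) with hstep
  set r : ℕ → V := fun n => step (buildHist step n) with hr
  have hhist : ∀ t, histList r t = buildHist step t := histList_buildSeq step
  have hlast : ∀ t, (buildHist step (t + 1)).getLastD v0 = r t := by
    intro t
    simp [buildHist, hr]
  -- invariant: the robber stays in S
  have hinv : ∀ t, (buildHist step t).getLastD v0 ∈ S ∧ r t ∈ S := by
    intro t
    induction t with
    | zero =>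
      refine ⟨hv0, ?_⟩
      exact (hpick _ _ hv0).1
    | succ t ih =>
      rw [hlast t]
      exact ⟨ih.2, (hpick _ _ (by rw [hlast t]; exact ih.2)).1⟩
  have hmove : ∀ t, r t = pick ((buildHist step t).getLastD v0) (F (buildHist step t)) := by
    intro t; rfl
  have hlegal : LegalPlay G F r := by
    constructor
    · intro t
      rw [hmove (t + 1), hlast t]
      exact (hpick (r t) (F (buildHist step (t + 1))) (hinv t).2).2.1
    · intro t i
      have := (hpick ((buildHist step t).getLastD v0) (F (buildHist step t))
        (hinv t).1).2.2 i
      rw [hhist t]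
      exact this
  obtain ⟨t, hsur⟩ := hwin r hlegal
  -- but the robber has more than k neighbors, so k cops never surround him
  have hdegr : k + 1 ≤ (G.neighborFinset (r t)).card := by
    rw [SimpleGraph.card_neighborFinset_eq_degree]
    exact hdeg _ (hinv t).2
  have hsub : G.neighborFinset (r t) ⊆ Finset.univ.image (F (histList r (t + 1))) := by
    intro w hw
    obtain ⟨i, hi⟩ := hsur w ((SimpleGraph.mem_neighborFinset _ _ _).1 hw)
    exact Finset.mem_image.2 ⟨i, Finset.mem_univ i, hi⟩
  have := Finset.card_le_card hsub
  have h2 : (Finset.univ.image (F (histList r (t + 1)))).card ≤ k := by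
    refine le_trans Finset.card_image_le ?_
    simp
  omega
end

section
/- Let H be a finite connected simple graph of minimum degree at least 5, and let G be the 1-subdivision of H. Then s(G) ≥ 4; that is, three cops do not suffice to surround the robber on G. -/
/-- The 1-subdivision of a graph `H`: every edge `uv` of `H` is replaced by a path
`u – w_{uv} – v` through a new vertex `w_{uv}`.  Its vertices are the vertices of `H`
together with the edges of `H`, and an original vertex `u` is adjacent to a
subdivision vertex `e` exactly when `u` is an endpoint of `e`. -/
def oneSubdivision {V : Type*} (H : SimpleGraph V) : SimpleGraph (V ⊕ H.edgeSet) :=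
  SimpleGraph.fromRel (fun a b =>
    match a, b with
    | Sum.inl u, Sum.inr e => u ∈ (e : Sym2 V)
    | _, _ => False)

section Aux

attribute [local instance] Classical.propDecidable

variable {V : Type*} (H : SimpleGraph V)

lemma oneSub_adj_inl_inr (u : V) (e : H.edgeSet) :
    (oneSubdivision H).Adj (Sum.inl u) (Sum.inr e) ↔ u ∈ (e : Sym2 V) := by
  simp [oneSubdivision, SimpleGraph.fromRel_adj]

lemma oneSub_not_adj_inl_inl (u v : V) :
    ¬ (oneSubdivision H).Adj (Sum.inl u) (Sum.inl v) := by
  simp [oneSubdivision, SimpleGraph.fromRel_adj]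

lemma oneSub_not_adj_inr_inr (e f : H.edgeSet) :
    ¬ (oneSubdivision H).Adj (Sum.inr e) (Sum.inr f) := by
  simp [oneSubdivision, SimpleGraph.fromRel_adj]

lemma oneSub_adj_inr_inl (u : V) (e : H.edgeSet) :
    (oneSubdivision H).Adj (Sum.inr e) (Sum.inl u) ↔ u ∈ (e : Sym2 V) := by
  simp [oneSubdivision, SimpleGraph.fromRel_adj]

lemma histList_succ {α : Type*} (r : ℕ → α) (t : ℕ) :
    histList r (t + 1) = histList r t ++ [r t] := by
  simp [histList, List.range_succ]

/-- The robber's flight rule and walk rule. -/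
noncomputable def robStep (c : Fin 3 → V ⊕ H.edgeSet) :
    V ⊕ H.edgeSet → V ⊕ H.edgeSet
  | Sum.inl u =>
      if h : ∃ v, H.Adj u v ∧ (∃ i, c i = Sum.inl u) ∧
          ∀ i w, stepRel (oneSubdivision H) (c i) w → w ≠ Sum.inl v then
        Sum.inr ⟨s(u, h.choose), H.mem_edgeSet.2 h.choose_spec.1⟩
      else Sum.inl u
  | Sum.inr e =>
      if h : ∃ v, v ∈ (e : Sym2 V) ∧ ∀ i, c i ≠ Sum.inl v then Sum.inl h.choose
      else Sum.inr e

noncomputable def robInit [Nonempty V] (c : Fin 3 → V ⊕ H.edgeSet) : V ⊕ H.edgeSet :=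
  if h : ∃ u : V, ∀ i, c i ≠ Sum.inl u then Sum.inl h.choose
  else Sum.inl (Classical.arbitrary V)

noncomputable def robAux [Nonempty V]
    (F : List (V ⊕ H.edgeSet) → Fin 3 → V ⊕ H.edgeSet) :
    ℕ → (V ⊕ H.edgeSet) × List (V ⊕ H.edgeSet)
  | 0 => (robInit H (F []), [])
  | t + 1 =>
      let p := robAux F t
      (robStep H (F (p.2 ++ [p.1])) p.1, p.2 ++ [p.1])

/-- The initial placement lemma: some original vertex is cop-free. -/
lemma exists_safe_init [Fintype V] [DecidableRel H.Adj]
    (c : Fin 3 → V ⊕ H.edgeSet) (u0 : V) (hdeg : 5 ≤ H.degree u0) :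
    ∃ u : V, ∀ i, c i ≠ Sum.inl u := by
  classical
  by_contra hcon
  push_neg at hcon
  set f : V → Fin 3 := fun u => (hcon u).choose with hf
  have hinj : Set.InjOn f ↑(insert u0 (H.neighborFinset u0)) := by
    intro a _ b _ hab
    have ha : c (f a) = Sum.inl a := (hcon a).choose_spec
    have hb : c (f b) = Sum.inl b := (hcon b).choose_spec
    rw [hab, hb] at ha
    exact (Sum.inl.inj ha).symm
  have hcard := Finset.card_le_card_of_injOn f
    (fun x _ => Finset.mem_univ _) hinj
  rw [Finset.card_insert_of_notMem (H.notMem_neighborFinset_self u0)] at hcard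
  have : 5 ≤ (H.neighborFinset u0).card := hdeg
  simp [Finset.card_univ] at hcard
  omega

/-- The flight lemma: if some cop stands on the robber's vertex `u`, then there
is a neighbor `v` of `u` such that no cop can reach `Sum.inl v` in one step. -/
lemma exists_safe_flee [Fintype V] [DecidableRel H.Adj] [DecidableEq V]
    (u : V) (c : Fin 3 → V ⊕ H.edgeSet)
    (hdeg : 5 ≤ H.degree u)
    (i₀ : Fin 3) (hi₀ : c i₀ = Sum.inl u) :
    ∃ v, H.Adj u v ∧ ∀ i w, stepRel (oneSubdivision H) (c i) w → w ≠ Sum.inl v := by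
  classical
  set T : Fin 3 → Finset V := fun i =>
    (H.neighborFinset u).filter
      (fun v => stepRel (oneSubdivision H) (c i) (Sum.inl v)) with hT
  have hT2 : ∀ i, (T i).card ≤ 2 := by
    intro i
    cases hc : c i with
    | inl w =>
        have hsub : T i ⊆ {w} := by
          intro v hv
          simp only [hT, Finset.mem_filter, hc] at hv
          rcases hv.2 with h | h
          · simp [Sum.inl.inj h.symm]
          · exact absurd h (oneSub_not_adj_inl_inl H w v)
        calc (T i).card ≤ ({w} : Finset V).card := Finset.card_le_card hsub
        _ ≤ 2 := by simp
    | inr e =>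
        obtain ⟨a, b, hab⟩ : ∃ a b, (e : Sym2 V) = s(a, b) := by
          induction (e : Sym2 V) using Sym2.ind with
          | _ a b => exact ⟨a, b, rfl⟩
        have hsub : T i ⊆ {a, b} := by
          intro v hv
          simp only [hT, Finset.mem_filter, hc] at hv
          rcases hv.2 with h | h
          · exact absurd h (by simp)
          · have : v ∈ (e : Sym2 V) := (oneSub_adj_inr_inl H v e).1 h
            rw [hab, Sym2.mem_iff] at this
            simpa using this
        calc (T i).card ≤ ({a, b} : Finset V).card := Finset.card_le_card hsub
        _ ≤ 2 := Finset.card_insert_le _ _ |>.trans (by simp)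
  have hbig : ((Finset.univ.erase i₀).biUnion T).card ≤ 4 := by
    calc ((Finset.univ.erase i₀).biUnion T).card
        ≤ ∑ i ∈ Finset.univ.erase i₀, (T i).card := Finset.card_biUnion_le
      _ ≤ (Finset.univ.erase i₀).card * 2 :=
          Finset.sum_le_card_nsmul _ _ 2 (fun i _ => hT2 i)
      _ ≤ 4 := by
          have : (Finset.univ.erase i₀).card ≤ 2 := by
            rw [Finset.card_erase_of_mem (Finset.mem_univ _)]
            simp
          omega
  have hlt : ((Finset.univ.erase i₀).biUnion T).card < (H.neighborFinset u).card := by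
    have : 5 ≤ (H.neighborFinset u).card := hdeg
    omega
  obtain ⟨v, hv1, hv2⟩ : ∃ v ∈ H.neighborFinset u,
      v ∉ (Finset.univ.erase i₀).biUnion T := by
    by_contra hcon
    push_neg at hcon
    exact absurd (Finset.card_le_card hcon) (by omega)
  refine ⟨v, (H.mem_neighborFinset u v).1 hv1, ?_⟩
  intro i w hsw hw
  subst hw
  by_cases hii : i = i₀
  · subst hii
    rw [hi₀] at hsw
    rcases hsw with h | h
    · have : u = v := Sum.inl.inj h
      exact H.irrefl (this ▸ (H.mem_neighborFinset u v).1 hv1)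
    · exact oneSub_not_adj_inl_inl H u v h
  · exact hv2 (Finset.mem_biUnion.2 ⟨i, Finset.mem_erase.2 ⟨hii, Finset.mem_univ i⟩,
      by simp only [hT, Finset.mem_filter]; exact ⟨hv1, hsw⟩⟩)


/-- Three cops cannot occupy all ≥ 5 subdivision-neighbors of an original vertex. -/
lemma not_surrounded_inl [Fintype V] [DecidableRel H.Adj] (u : V)
    (c : Fin 3 → V ⊕ H.edgeSet) (hdeg : 5 ≤ H.degree u)
    (hs : ∀ w, (oneSubdivision H).Adj (Sum.inl u) w → ∃ i, c i = w) : False := by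
  classical
  have key : ∀ v, (hv : H.Adj u v) →
      ∃ i, c i = Sum.inr (⟨s(u, v), H.mem_edgeSet.2 hv⟩ : H.edgeSet) := by
    intro v hv
    exact hs _ ((oneSub_adj_inl_inr H u _).2 (Sym2.mem_mk_left u v))
  set f : V → Fin 3 := fun v =>
    if hv : H.Adj u v then (key v hv).choose else 0 with hf
  have hspec : ∀ v, (hv : H.Adj u v) →
      c (f v) = Sum.inr (⟨s(u, v), H.mem_edgeSet.2 hv⟩ : H.edgeSet) := by
    intro v hv
    simp only [hf, dif_pos hv]
    exact (key v hv).choose_spec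
  have hinj : Set.InjOn f ↑(H.neighborFinset u) := by
    intro a ha b hb hab
    have ha' : H.Adj u a := (H.mem_neighborFinset u a).1 (by simpa using ha)
    have hb' : H.Adj u b := (H.mem_neighborFinset u b).1 (by simpa using hb)
    have h1 := hspec a ha'
    have h2 := hspec b hb'
    rw [hab, h2] at h1
    have h3 : (⟨s(u, b), H.mem_edgeSet.2 hb'⟩ : H.edgeSet)
        = ⟨s(u, a), H.mem_edgeSet.2 ha'⟩ := Sum.inr.inj h1
    have h4 : s(u, b) = s(u, a) := congrArg Subtype.val h3
    exact (Sym2.congr_right.mp h4).symm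
  have hcard := Finset.card_le_card_of_injOn f
    (fun x _ => Finset.mem_univ _) hinj
  have : 5 ≤ (H.neighborFinset u).card := hdeg
  simp [Finset.card_univ] at hcard
  omega

end Aux

/-- Let `H` be a finite connected simple graph of minimum degree at
least `5`, and let `G` be the 1-subdivision of `H`.  Then `s(G) ≥ 4`; that is, three
cops do not suffice to surround the robber on `G`. -/


theorem subdivision_min_degree_five_needs_four_cops {V : Type*} [Fintype V]
    (H : SimpleGraph V) [DecidableRel H.Adj] (hconn : H.Connected)
    (hdeg : ∀ v : V, 5 ≤ H.degree v) :
    ¬ CopsWin (oneSubdivision H) 3 := by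
  classical
  rintro ⟨F, hvalid, hwin⟩
  haveI : Nonempty V := hconn.nonempty
  set r : ℕ → V ⊕ H.edgeSet := fun t => (robAux H F t).1 with hr
  -- the recorded history agrees with `histList`
  have hhist : ∀ t, (robAux H F t).2 = histList r t := by
    intro t
    induction t with
    | zero => simp [robAux, histList]
    | succ t ih =>
        show (robAux H F t).2 ++ [(robAux H F t).1] = _
        rw [ih, histList_succ]
  have hstep : ∀ t, r (t + 1) = robStep H (F (histList r (t + 1))) (r t) := by
    intro t
    show (robAux H F (t + 1)).1 = _
    rw [show (robAux H F (t + 1)).1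
        = robStep H (F ((robAux H F t).2 ++ [(robAux H F t).1])) (robAux H F t).1
        from rfl, hhist, histList_succ]
  -- the invariant
  set Inv : ℕ → Prop := fun t =>
    (∃ u, r t = Sum.inl u ∧ ∀ i, F (histList r t) i ≠ Sum.inl u) ∨
    (∃ (e : H.edgeSet) (v : V), r t = Sum.inr e ∧ v ∈ (e : Sym2 V) ∧
      ∀ i w, stepRel (oneSubdivision H) (F (histList r t) i) w → w ≠ Sum.inl v)
    with hInvDef
  have hInv : ∀ t, Inv t := by
    intro t
    induction t with
    | zero =>
        left
        have hex : ∃ u : V, ∀ i, F [] i ≠ Sum.inl u :=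
          exists_safe_init H (F []) (Classical.arbitrary V) (hdeg _)
        have h0 : r 0 = Sum.inl hex.choose := by
          show (robAux H F 0).1 = _
          simp only [robAux, robInit, dif_pos hex]
        refine ⟨hex.choose, h0, ?_⟩
        have : histList r 0 = [] := by simp [histList]
        rw [this]
        exact hex.choose_spec
    | succ t ih =>
        have hs := hstep t
        rcases ih with ⟨u, hu, hcu⟩ | ⟨e, v, he, hv, hcv⟩
        · rw [hu] at hs
          by_cases hcop : ∃ i, F (histList r (t + 1)) i = Sum.inl u
          · obtain ⟨i₀, hi₀⟩ := hcop
            obtain ⟨v, hadj, hsafe⟩ :=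
              exists_safe_flee H u (F (histList r (t + 1))) (hdeg u) i₀ hi₀
            have hex : ∃ v, H.Adj u v ∧ (∃ i, F (histList r (t + 1)) i = Sum.inl u) ∧
                ∀ i w, stepRel (oneSubdivision H) (F (histList r (t + 1)) i) w →
                  w ≠ Sum.inl v := ⟨v, hadj, ⟨i₀, hi₀⟩, hsafe⟩
            rw [show robStep H (F (histList r (t + 1))) (Sum.inl u)
                = Sum.inr ⟨s(u, hex.choose), H.mem_edgeSet.2 hex.choose_spec.1⟩
                from by simp only [robStep, dif_pos hex]] at hs
            right
            exact ⟨_, hex.choose, hs, Sym2.mem_mk_right u _, hex.choose_spec.2.2⟩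
          · push_neg at hcop
            have hnex : ¬ ∃ v, H.Adj u v ∧ (∃ i, F (histList r (t + 1)) i = Sum.inl u) ∧
                ∀ i w, stepRel (oneSubdivision H) (F (histList r (t + 1)) i) w →
                  w ≠ Sum.inl v := by
              rintro ⟨v, -, ⟨i, hi⟩, -⟩
              exact hcop i hi
            rw [show robStep H (F (histList r (t + 1))) (Sum.inl u) = Sum.inl u
                from by simp only [robStep, dif_neg hnex]] at hs
            exact Or.inl ⟨u, hs, hcop⟩
        · have hcv' : ∀ i, F (histList r (t + 1)) i ≠ Sum.inl v := by
            intro i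
            have h2 := hvalid (histList r t) (r t) i
            rw [← histList_succ] at h2
            exact hcv i _ h2
          rw [he] at hs
          have hex : ∃ w, w ∈ (e : Sym2 V) ∧
              ∀ i, F (histList r (t + 1)) i ≠ Sum.inl w := ⟨v, hv, hcv'⟩
          rw [show robStep H (F (histList r (t + 1))) (Sum.inr e) = Sum.inl hex.choose
              from by simp only [robStep, dif_pos hex]] at hs
          exact Or.inl ⟨hex.choose, hs, hex.choose_spec.2⟩
  -- the play is legal
  have hlegal : LegalPlay (oneSubdivision H) F r := by
    constructor
    · intro t
      rw [hstep t]
      cases hrt : r t with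
      | inl u =>
          by_cases h : ∃ v, H.Adj u v ∧ (∃ i, F (histList r (t + 1)) i = Sum.inl u) ∧
              ∀ i w, stepRel (oneSubdivision H) (F (histList r (t + 1)) i) w →
                w ≠ Sum.inl v
          · rw [show robStep H (F (histList r (t + 1))) (Sum.inl u)
                = Sum.inr ⟨s(u, h.choose), H.mem_edgeSet.2 h.choose_spec.1⟩
                from by simp only [robStep, dif_pos h]]
            exact Or.inr ((oneSub_adj_inl_inr H u _).2 (Sym2.mem_mk_left u _))
          · rw [show robStep H (F (histList r (t + 1))) (Sum.inl u) = Sum.inl u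
                from by simp only [robStep, dif_neg h]]
            exact Or.inl rfl
      | inr e =>
          by_cases h : ∃ w, w ∈ (e : Sym2 V) ∧
              ∀ i, F (histList r (t + 1)) i ≠ Sum.inl w
          · rw [show robStep H (F (histList r (t + 1))) (Sum.inr e) = Sum.inl h.choose
                from by simp only [robStep, dif_pos h]]
            exact Or.inr ((oneSub_adj_inr_inl H _ e).2 h.choose_spec.1)
          · rw [show robStep H (F (histList r (t + 1))) (Sum.inr e) = Sum.inr e
                from by simp only [robStep, dif_neg h]]
            exact Or.inl rfl
    · intro t i
      rcases hInv t with ⟨u, hu, hcu⟩ | ⟨e, v, he, hv, hcv⟩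
      · rw [hu]; exact hcu i
      · rw [he]
        intro hcon
        exact hcv i (Sum.inl v)
          (by rw [hcon]; exact Or.inr ((oneSub_adj_inr_inl H v e).2 hv)) rfl
  obtain ⟨t, hsur⟩ := hwin r hlegal
  unfold SurroundedAt at hsur
  rcases hInv t with ⟨u, hu, -⟩ | ⟨e, v, he, hv, hcv⟩
  · rw [hu] at hsur
    exact not_surrounded_inl H u (F (histList r (t + 1))) (hdeg u) hsur
  · rw [he] at hsur
    obtain ⟨i, hi⟩ := hsur (Sum.inl v) ((oneSub_adj_inr_inl H v e).2 hv)
    have h2 := hvalid (histList r t) (r t) i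
    rw [← histList_succ] at h2
    exact hcv i _ h2 hi
end

section
/- Let n ≥ 4 and let G be a simple graph on vertices {v_0, …, v_{n−1}} that contains the Hamiltonian cycle v_0 v_1 ⋯ v_{n−1} v_0 and in which no two chords cross. If v_i v_j is a chord of G with 0 ≤ i < j ≤ n−1, then the graph G − {v_i, v_j} has exactly two connected components, whose vertex sets are {v_{i+1}, …, v_{j−1}} and {v_{j+1}, …, v_{n−1}, v_0, …, v_{i−1}}. -/
/-- For a graph `G` on `Fin n` containing all Hamiltonian-cycle edges
`v_t v_{t+1 (mod n)}`, a chord is an edge `v_a v_b` of `G` with `b ≢ a ± 1 (mod n)`. -/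
def IsChord {n : ℕ} [NeZero n] (G : SimpleGraph (Fin n)) (a b : Fin n) : Prop :=
  G.Adj a b ∧ b ≠ a + 1 ∧ a ≠ b + 1


section Helpers
variable {n : ℕ} [NeZero n]

lemma val_add_one_lt (hn : 2 ≤ n) (x : Fin n) (h : x.val + 1 < n) :
    (x + 1).val = x.val + 1 := by
  have h1 : 1 % n = 1 := Nat.mod_eq_of_lt (by omega)
  rw [Fin.val_add, Fin.val_one', h1, Nat.mod_eq_of_lt h]

lemma add_one_last (hn : 2 ≤ n) (x : Fin n) (h : x.val = n - 1) : x + 1 = 0 := by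
  have h1 : 1 % n = 1 := Nat.mod_eq_of_lt (by omega)
  apply Fin.ext
  rw [Fin.val_add, Fin.val_one', h1, Fin.val_zero, h]
  have h2 : n - 1 + 1 = n := by omega
  rw [h2, Nat.mod_self]

lemma val_sub_one (hn : 2 ≤ n) (y : Fin n) (hy : y ≠ 0) : (y - 1).val = y.val - 1 := by
  have h1 : (1 : Fin n).val = 1 := by
    rw [Fin.val_one']; exact Nat.mod_eq_of_lt (by omega)
  have hy' : 1 ≤ y.val := by
    have : y.val ≠ 0 := fun h => hy (Fin.ext h)
    omega
  rw [Fin.sub_def]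
  simp only [h1]
  have : n - 1 + y.val = (y.val - 1) + n := by omega
  rw [this, Nat.add_mod_right]
  exact Nat.mod_eq_of_lt (by omega)

lemma chain_reach (hn : 2 ≤ n) {G : SimpleGraph (Fin n)} {s : Set (Fin n)}
    (S : Set (Fin n)) (t : Fin n)
    (hSs : ∀ x ∈ S, x ∈ s) (htS : t ∈ S)
    (hstep : ∀ x ∈ S, x ≠ t → x + 1 ∈ S)
    (hadj : ∀ x : Fin n, G.Adj x (x + 1)) :
    ∀ x (hx : x ∈ S), (G.induce s).Reachable ⟨x, hSs x hx⟩ ⟨t, hSs t htS⟩ := by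
  have key : ∀ k x (hx : x ∈ S), (t - x).val = k →
      (G.induce s).Reachable ⟨x, hSs x hx⟩ ⟨t, hSs t htS⟩ := by
    intro k
    induction k using Nat.strong_induction_on with
    | _ k ih =>
      intro x hx hk
      by_cases hxt : x = t
      · subst hxt; rfl
      · have hx1 : x + 1 ∈ S := hstep x hx hxt
        have hadj' : (G.induce s).Adj ⟨x, hSs x hx⟩ ⟨x + 1, hSs _ hx1⟩ := by
          simp only [SimpleGraph.induce, SimpleGraph.comap]
          exact hadj x
        have hne : t - x ≠ 0 := sub_ne_zero.mpr (Ne.symm hxt)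
        have hpos : 1 ≤ (t - x).val := by
          have : (t - x).val ≠ 0 := fun h => hne (Fin.ext h)
          omega
        have hdec : (t - (x + 1)).val < k := by
          have heq : t - (x + 1) = (t - x) - 1 := sub_add_eq_sub_sub _ _ _
          rw [heq, val_sub_one hn _ hne]
          omega
        exact hadj'.reachable.trans (ih _ hdec (x + 1) hx1 rfl)
  intro x hx; exact key _ x hx rfl

end Helpers

/-- Let `n ≥ 4` and let `G` be a simple graph on the vertices
`v_0, …, v_{n-1}` (here `Fin n`) containing the Hamiltonian cycle
`v_0 v_1 ⋯ v_{n-1} v_0`, in which no two chords cross (chords `v_a v_b` and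
`v_c v_d`, with `a < b` and `c < d`, cross when `a < c < b < d` or
`c < a < d < b`).  If `v_i v_j` is a chord with `i < j`, then the graph
`G − {v_i, v_j}` has exactly two connected components, whose vertex sets are
`{v_{i+1}, …, v_{j-1}}` and `{v_{j+1}, …, v_{n-1}, v_0, …, v_{i-1}}`. -/
theorem chord_separates_outerplanar {n : ℕ} [NeZero n] (hn : 4 ≤ n) (G : SimpleGraph (Fin n))
    (hham : ∀ t : Fin n, G.Adj t (t + 1))
    (hnocross : ∀ a b c d : Fin n, IsChord G a b → IsChord G c d →
      a < c → c < b → b < d → False)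
    (i j : Fin n) (hij : i < j) (hchord : IsChord G i j) :
    -- the two arcs of the Hamiltonian cycle determined by `v_i` and `v_j`:
    let A : Set (Fin n) := {x | i < x ∧ x < j}
    let B : Set (Fin n) := {x | x < i ∨ j < x}
    -- the graph `G - {v_i, v_j}`:
    let s : Set (Fin n) := {x | x ≠ i ∧ x ≠ j}
    let G' : SimpleGraph s := G.induce s
    -- `A` and `B` are nonempty, disjoint, and cover all vertices of `G - {v_i, v_j}`,
    A.Nonempty ∧ B.Nonempty ∧ (∀ x : Fin n, ¬ (x ∈ A ∧ x ∈ B)) ∧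
      (∀ x : s, (x : Fin n) ∈ A ∨ (x : Fin n) ∈ B) ∧
      -- each of `A`, `B` spans a connected piece of `G - {v_i, v_j}`,
      (∀ u v : s, (u : Fin n) ∈ A → (v : Fin n) ∈ A → G'.Reachable u v) ∧
      (∀ u v : s, (u : Fin n) ∈ B → (v : Fin n) ∈ B → G'.Reachable u v) ∧
      -- and no vertex of `A` is reachable from a vertex of `B`.
      (∀ u v : s, (u : Fin n) ∈ A → (v : Fin n) ∈ B → ¬ G'.Reachable u v) := by
  intro A B s G'
  obtain ⟨hadjij, hji1, hij1⟩ := hchord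
  have hchordij : IsChord G i j := ⟨hadjij, hji1, hij1⟩
  have hn2 : 2 ≤ n := by omega
  have hilt : i.val < j.val := hij
  have hjn : j.val < n := j.isLt
  have hin : i.val < n := i.isLt
  -- j.val ≥ i.val + 2
  have hj2 : i.val + 2 ≤ j.val := by
    by_contra h
    have hje : j.val = i.val + 1 := by omega
    exact hji1 (Fin.ext (by rw [val_add_one_lt hn2 i (by omega)]; omega))
  -- not both endpoints at the extremes
  have hnotwrap : ¬ (i.val = 0 ∧ j.val = n - 1) := by
    rintro ⟨h0, h1⟩
    have hj10 : j + 1 = 0 := add_one_last hn2 j h1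
    exact hij1 (by rw [hj10]; exact Fin.ext (by simp [h0]))
  -- membership characterizations
  have hmemA : ∀ x : Fin n, x ∈ A ↔ (i.val < x.val ∧ x.val < j.val) := by
    intro x; constructor
    · exact fun h => ⟨Fin.lt_def.mp h.1, Fin.lt_def.mp h.2⟩
    · exact fun h => ⟨Fin.lt_def.mpr h.1, Fin.lt_def.mpr h.2⟩
  have hmemB : ∀ x : Fin n, x ∈ B ↔ (x.val < i.val ∨ j.val < x.val) := by
    intro x; constructor
    · rintro (h | h); exacts [Or.inl (Fin.lt_def.mp h), Or.inr (Fin.lt_def.mp h)]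
    · rintro (h | h); exacts [Or.inl (Fin.lt_def.mpr h), Or.inr (Fin.lt_def.mpr h)]
  -- subsets of s
  have hAs : ∀ x ∈ A, x ∈ s := by
    intro x hx
    rw [hmemA] at hx
    exact ⟨fun h => by rw [h] at hx; omega, fun h => by rw [h] at hx; omega⟩
  have hBs : ∀ x ∈ B, x ∈ s := by
    intro x hx
    rw [hmemB] at hx
    exact ⟨fun h => by rw [h] at hx; omega, fun h => by rw [h] at hx; omega⟩
  -- nonempty
  have hAne : A.Nonempty := by
    refine ⟨i + 1, ?_⟩
    rw [hmemA, val_add_one_lt hn2 i (by omega)]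
    omega
  have hBne : B.Nonempty := by
    by_cases hi0 : i.val = 0
    · have hjlt : j.val < n - 1 := by
        have : j.val ≠ n - 1 := fun h => hnotwrap ⟨hi0, h⟩
        omega
      refine ⟨j + 1, ?_⟩
      rw [hmemB, val_add_one_lt hn2 j (by omega)]
      omega
    · refine ⟨0, ?_⟩
      rw [hmemB, Fin.val_zero]
      omega
  -- disjoint
  have hdisj : ∀ x : Fin n, ¬ (x ∈ A ∧ x ∈ B) := by
    intro x ⟨h1, h2⟩
    rw [hmemA] at h1; rw [hmemB] at h2
    omega
  -- cover
  have hcover : ∀ x : s, (x : Fin n) ∈ A ∨ (x : Fin n) ∈ B := by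
    intro x
    have h1 : (x : Fin n).val ≠ i.val := fun h => x.2.1 (Fin.ext h)
    have h2 : (x : Fin n).val ≠ j.val := fun h => x.2.2 (Fin.ext h)
    rw [hmemA, hmemB]
    omega
  -- chain for A with terminal j - 1
  have hjne0 : j ≠ 0 := by
    intro h
    rw [h] at hilt; simp at hilt
  have htAval : (j - 1).val = j.val - 1 := val_sub_one hn2 j hjne0
  have htAmem : j - 1 ∈ A := by rw [hmemA, htAval]; omega
  have hAstep : ∀ x ∈ A, x ≠ j - 1 → x + 1 ∈ A := by
    intro x hx hne
    rw [hmemA] at hx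
    have hxv : x.val ≠ j.val - 1 := fun h => hne (Fin.ext (by rw [htAval]; exact h))
    rw [hmemA, val_add_one_lt hn2 x (by omega)]
    omega
  have reachA := chain_reach hn2 A (j - 1) hAs htAmem hAstep hham (G := G) (s := s)
  have hreachA : ∀ u v : s, (u : Fin n) ∈ A → (v : Fin n) ∈ A → G'.Reachable u v := by
    intro u v hu hv
    exact (reachA u hu).trans (reachA v hv).symm
  -- chain for B with terminal i - 1
  have hv01 : ((0 : Fin n) - 1).val = n - 1 := by
    rw [Fin.sub_def]
    show (n - (1 : Fin n).val + (0 : Fin n).val) % n = n - 1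
    have h1 : (1 : Fin n).val = 1 := by rw [Fin.val_one']; exact Nat.mod_eq_of_lt (by omega)
    rw [h1, Fin.val_zero, Nat.add_zero]
    exact Nat.mod_eq_of_lt (by omega)
  have htBval : (i - 1).val = if i.val = 0 then n - 1 else i.val - 1 := by
    by_cases hi0 : i = 0
    · rw [hi0, hv01]; simp
    · have hiv : i.val ≠ 0 := fun h => hi0 (Fin.ext h)
      rw [val_sub_one hn2 i hi0]; simp [hiv]
  have htBmem : i - 1 ∈ B := by
    rw [hmemB, htBval]
    by_cases hi0 : i.val = 0
    · have hjlt : j.val ≠ n - 1 := fun h => hnotwrap ⟨hi0, h⟩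
      simp [hi0]; omega
    · rw [if_neg hi0]; omega
  have hBstep : ∀ x ∈ B, x ≠ i - 1 → x + 1 ∈ B := by
    intro x hx hne
    rw [hmemB] at hx
    have hxv : x.val ≠ (i - 1).val := fun h => hne (Fin.ext h)
    rw [htBval] at hxv
    rcases hx with hlt | hgt
    · have hi0 : i.val ≠ 0 := by omega
      rw [if_neg hi0] at hxv
      rw [hmemB, val_add_one_lt hn2 x (by omega)]
      omega
    · by_cases hxl : x.val = n - 1
      · have hi0 : i.val ≠ 0 := by
          intro h; rw [if_pos h] at hxv; exact hxv hxl
        rw [add_one_last hn2 x hxl, hmemB, Fin.val_zero]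
        omega
      · rw [hmemB, val_add_one_lt hn2 x (by omega)]
        omega
  have reachB := chain_reach hn2 B (i - 1) hBs htBmem hBstep hham (G := G) (s := s)
  have hreachB : ∀ u v : s, (u : Fin n) ∈ B → (v : Fin n) ∈ B → G'.Reachable u v := by
    intro u v hu hv
    exact (reachB u hu).trans (reachB v hv).symm
  -- no edges between A and B
  have hnoedge : ∀ u v : s, (u : Fin n) ∈ A → (v : Fin n) ∈ B → ¬ G'.Adj u v := by
    intro u v hu hv hadj
    have hGadj : G.Adj (u : Fin n) (v : Fin n) := hadj
    rw [hmemA] at hu; rw [hmemB] at hv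
    rcases hv with hvl | hvr
    · -- v < i < u < j ; chord (v, u) crosses (i, j)
      have hvu : IsChord G (v : Fin n) (u : Fin n) := by
        refine ⟨hGadj.symm, ?_, ?_⟩
        · intro h
          have := congrArg Fin.val h
          rw [val_add_one_lt hn2 (v : Fin n) (by omega)] at this
          omega
        · intro h
          have := congrArg Fin.val h
          rw [val_add_one_lt hn2 (u : Fin n) (by omega)] at this
          omega
      exact hnocross (v : Fin n) (u : Fin n) i j hvu hchordij
        (Fin.lt_def.mpr (by omega)) (Fin.lt_def.mpr (by omega)) (Fin.lt_def.mpr (by omega))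
    · -- i < u < j < v ; chord (u, v) crosses (i, j)
      have huv : IsChord G (u : Fin n) (v : Fin n) := by
        refine ⟨hGadj, ?_, ?_⟩
        · intro h
          have := congrArg Fin.val h
          rw [val_add_one_lt hn2 (u : Fin n) (by omega)] at this
          omega
        · intro h
          by_cases hvl : (v : Fin n).val = n - 1
          · rw [add_one_last hn2 (v : Fin n) hvl] at h
            have := congrArg Fin.val h
            rw [Fin.val_zero] at this
            omega
          · have := congrArg Fin.val h
            rw [val_add_one_lt hn2 (v : Fin n) (by omega)] at this
            omega
      exact hnocross i j (u : Fin n) (v : Fin n) hchordij huv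
        (Fin.lt_def.mpr (by omega)) (Fin.lt_def.mpr (by omega)) (Fin.lt_def.mpr (by omega))
  -- walks starting in A stay in A
  have hAclosed : ∀ (u v : s), G'.Walk u v → (u : Fin n) ∈ A → (v : Fin n) ∈ A := by
    intro u v w
    induction w with
    | nil => exact fun h => h
    | @cons a b c hab p ih =>
        intro hu
        rcases hcover b with hb | hb
        · exact ih hb
        · exact absurd hab (hnoedge a b hu hb)
  refine ⟨hAne, hBne, hdisj, hcover, hreachA, hreachB, ?_⟩
  intro u v hu hv hr
  obtain ⟨w⟩ := hr
  exact hdisj (v : Fin n) ⟨hAclosed u v w hu, hv⟩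
end

section
/- Let G be a finite connected simple graph admitting an outerplanar (one-page) layout: an enumeration v_0, …, v_{n−1} of its vertices such that there are no two edges v_a v_b and v_c v_d of G with a < c < b < d. Then s(G) ≤ 3; that is, three cops suffice to surround the robber on G. -/
namespace SCRAux

variable {V : Type*}

/-- No two edges of `G` cross in the layout `k`. -/
def NoCross (G : SimpleGraph V) (k : V → ℕ) : Prop :=
  ∀ ⦃x y u w : V⦄, G.Adj x y → G.Adj u w →
    k x < k u → k u < k y → k y < k w → False

/-- Everything reachable from `ρ` while avoiding `a` and `b` lies strictly
between `a` and `b` in the layout. -/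
def Seal (G : SimpleGraph V) (k : V → ℕ) (a b ρ : V) : Prop :=
  ∀ x, Relation.ReflTransGen (fun u v => G.Adj u v ∧ v ≠ a ∧ v ≠ b) ρ x →
    k a < k x ∧ k x < k b

theorem Seal.mem {G : SimpleGraph V} {k : V → ℕ} {a b ρ : V}
    (h : Seal G k a b ρ) : k a < k ρ ∧ k ρ < k b :=
  h ρ Relation.ReflTransGen.refl

theorem seal_step {G : SimpleGraph V} {k : V → ℕ} {a b ρ ρ' : V}
    (h : Seal G k a b ρ) (hs : stepRel G ρ ρ') (h1 : ρ' ≠ a) (h2 : ρ' ≠ b) :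
    Seal G k a b ρ' := by
  rcases hs with rfl | hadj
  · exact h
  · intro x hx
    exact h x (Relation.ReflTransGen.head ⟨hadj, h1, h2⟩ hx)

theorem seal_of_edge {G : SimpleGraph V} {k : V → ℕ} {a m ρ : V}
    (hcr : NoCross G k) (hk : Function.Injective k)
    (ha : G.Adj a m) (h1 : k a < k ρ) (h2 : k ρ < k m) :
    Seal G k a m ρ := by
  intro x hx
  induction hx with
  | refl => exact ⟨h1, h2⟩
  | @tail y z hR hstep ih =>
    obtain ⟨hadj, hna, hnm⟩ := hstep
    rcases lt_trichotomy (k z) (k a) with hlt | heq | hgt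
    · exact (hcr hadj.symm ha hlt ih.1 ih.2).elim
    · exact (hna (hk heq)).elim
    · refine ⟨hgt, ?_⟩
      rcases lt_trichotomy (k z) (k m) with hlt' | heq' | hgt'
      · exact hlt'
      · exact (hnm (hk heq')).elim
      · exact (hcr ha hadj ih.1 ih.2 hgt').elim

theorem seal_of_edge' {G : SimpleGraph V} {k : V → ℕ} {m b ρ : V}
    (hcr : NoCross G k) (hk : Function.Injective k)
    (hb : G.Adj m b) (h1 : k m < k ρ) (h2 : k ρ < k b) :
    Seal G k m b ρ := by
  intro x hx
  induction hx with
  | refl => exact ⟨h1, h2⟩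
  | @tail y z hR hstep ih =>
    obtain ⟨hadj, hnm, hnb⟩ := hstep
    rcases lt_trichotomy (k z) (k m) with hlt | heq | hgt
    · exact (hcr hadj.symm hb hlt ih.1 ih.2).elim
    · exact (hnm (hk heq)).elim
    · refine ⟨hgt, ?_⟩
      rcases lt_trichotomy (k z) (k b) with hlt' | heq' | hgt'
      · exact hlt'
      · exact (hnb (hk heq')).elim
      · exact (hcr hb hadj ih.1 ih.2 hgt').elim

theorem seal_shrink_right {G : SimpleGraph V} {k : V → ℕ} {a b m ρ : V}
    (hcr : NoCross G k) (hk : Function.Injective k)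
    (hS : Seal G k a b ρ) (ham : k a < k m) (hadj : G.Adj a m)
    (hmax : ∀ z, G.Adj a z → k a < k z → k z < k b → k z ≤ k m)
    (h1 : k m < k ρ) : Seal G k m b ρ := by
  have main : ∀ x, Relation.ReflTransGen (fun u v => G.Adj u v ∧ v ≠ m ∧ v ≠ b) ρ x →
      (k m < k x ∧ k x < k b) ∧
        Relation.ReflTransGen (fun u v => G.Adj u v ∧ v ≠ a ∧ v ≠ b) ρ x := by
    intro x hx
    induction hx with
    | refl => exact ⟨⟨h1, hS.mem.2⟩, Relation.ReflTransGen.refl⟩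
    | @tail y z hR hstep ih =>
      obtain ⟨hadjyz, hnm, hnb⟩ := hstep
      obtain ⟨⟨hmy, hyb⟩, hRy⟩ := ih
      have hza : z ≠ a := by
        rintro rfl
        exact absurd (hmax y hadjyz.symm (ham.trans hmy) hyb) (not_le.2 hmy)
      have hRz := hRy.tail ⟨hadjyz, hza, hnb⟩
      have hzb := hS z hRz
      refine ⟨⟨?_, hzb.2⟩, hRz⟩
      rcases lt_trichotomy (k z) (k m) with hlt | heq | hgt
      · exact (hcr hadj hadjyz.symm hzb.1 hlt hmy).elim
      · exact (hnm (hk heq)).elim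
      · exact hgt
  intro x hx
  exact (main x hx).1

theorem seal_shrink_left {G : SimpleGraph V} {k : V → ℕ} {a b m ρ : V}
    (hcr : NoCross G k) (hk : Function.Injective k)
    (hS : Seal G k a b ρ) (hmb : k m < k b) (hadj : G.Adj b m)
    (hmin : ∀ z, G.Adj b z → k a < k z → k z < k b → k m ≤ k z)
    (h1 : k ρ < k m) : Seal G k a m ρ := by
  have main : ∀ x, Relation.ReflTransGen (fun u v => G.Adj u v ∧ v ≠ a ∧ v ≠ m) ρ x →
      (k a < k x ∧ k x < k m) ∧
        Relation.ReflTransGen (fun u v => G.Adj u v ∧ v ≠ a ∧ v ≠ b) ρ x := by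
    intro x hx
    induction hx with
    | refl => exact ⟨⟨hS.mem.1, h1⟩, Relation.ReflTransGen.refl⟩
    | @tail y z hR hstep ih =>
      obtain ⟨hadjyz, hna, hnm⟩ := hstep
      obtain ⟨⟨hay, hym⟩, hRy⟩ := ih
      have hzb : z ≠ b := by
        rintro rfl
        exact absurd (hmin y hadjyz.symm hay (hym.trans hmb)) (not_le.2 hym)
      have hRz := hRy.tail ⟨hadjyz, hna, hzb⟩
      have hza := hS z hRz
      refine ⟨⟨hza.1, ?_⟩, hRz⟩
      rcases lt_trichotomy (k z) (k m) with hlt | heq | hgt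
      · exact hlt
      · exact (hnm (hk heq)).elim
      · exact (hcr hadjyz hadj.symm hym hgt hza.2).elim
  intro x hx
  exact (main x hx).1

/-- A pivot for the interval `(a, b)`: a vertex strictly inside which is either the
largest neighbor of `a` inside, or the smallest neighbor of `b` inside. -/
def IsPivot (G : SimpleGraph V) (k : V → ℕ) (a b m : V) : Prop :=
  (k a < k m ∧ k m < k b) ∧
    ((G.Adj a m ∧ ∀ z, G.Adj a z → k a < k z → k z < k b → k z ≤ k m) ∨
     (G.Adj b m ∧ ∀ z, G.Adj b z → k a < k z → k z < k b → k m ≤ k z))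

theorem pivot_exists [Fintype V] {G : SimpleGraph V} {k : V → ℕ} {a b ρ : V}
    (hG : G.Connected) (hS : Seal G k a b ρ) :
    ∃ m, IsPivot G k a b m := by
  classical
  have exit : ∃ x y, Relation.ReflTransGen (fun u v => G.Adj u v ∧ v ≠ a ∧ v ≠ b) ρ x ∧
      G.Adj x y ∧ (y = a ∨ y = b) := by
    have aux : ∀ (s c : V) (_ : G.Walk s c), (c = a ∨ c = b) →
        Relation.ReflTransGen (fun u v => G.Adj u v ∧ v ≠ a ∧ v ≠ b) ρ s →
        ∃ x y, Relation.ReflTransGen (fun u v => G.Adj u v ∧ v ≠ a ∧ v ≠ b) ρ x ∧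
          G.Adj x y ∧ (y = a ∨ y = b) := by
      intro s c w
      induction w with
      | nil =>
        intro hc h
        obtain ⟨h1, h2⟩ := hS _ h
        rcases hc with rfl | rfl
        · exact absurd h1 (lt_irrefl _)
        · exact absurd h2 (lt_irrefl _)
      | @cons s t c hadj w ih =>
        intro hc hs
        by_cases h1 : t = a ∨ t = b
        · exact ⟨s, t, hs, hadj, h1⟩
        · push_neg at h1
          exact ih hc (hs.tail ⟨hadj, h1.1, h1.2⟩)
    exact aux ρ a (Classical.choice (hG.preconnected ρ a)) (Or.inl rfl)
      Relation.ReflTransGen.refl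
  obtain ⟨x, y, hxR, hxy, hy⟩ := exit
  obtain ⟨hax, hxb⟩ := hS x hxR
  rcases hy with rfl | rfl
  · have hne : (Finset.univ.filter (fun z => G.Adj y z ∧ k y < k z ∧ k z < k b)).Nonempty :=
      ⟨x, by simp [hxy.symm, hax, hxb]⟩
    obtain ⟨m, hmS, hmax⟩ := Finset.exists_max_image _ k hne
    simp only [Finset.mem_filter, Finset.mem_univ, true_and] at hmS
    exact ⟨m, ⟨hmS.2.1, hmS.2.2⟩,
      Or.inl ⟨hmS.1, fun z hz h1 h2 => hmax z (by simp [hz, h1, h2])⟩⟩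
  · have hne : (Finset.univ.filter (fun z => G.Adj y z ∧ k a < k z ∧ k z < k y)).Nonempty :=
      ⟨x, by simp [hxy.symm, hax, hxb]⟩
    obtain ⟨m, hmS, hmin⟩ := Finset.exists_min_image _ k hne
    simp only [Finset.mem_filter, Finset.mem_univ, true_and] at hmS
    exact ⟨m, ⟨hmS.2.1, hmS.2.2⟩,
      Or.inr ⟨hmS.1, fun z hz h1 h2 => hmin z (by simp [hz, h1, h2])⟩⟩

open Classical in
noncomputable def pivotD (G : SimpleGraph V) (k : V → ℕ) (a b : V) : V :=
  if h : ∃ m, IsPivot G k a b m then h.choose else a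

theorem pivotD_spec {G : SimpleGraph V} {k : V → ℕ} {a b : V}
    (h : ∃ m, IsPivot G k a b m) : IsPivot G k a b (pivotD G k a b) := by
  rw [pivotD]
  split
  · next h' => exact h'.choose_spec
  · next h' => exact absurd h h'


/-- The internal state of the cop player's strategy machine. -/
structure MSt (V : Type*) where
  pa : V
  pb : V
  pc : V
  ph : Bool
  mv : Bool
  route : List V

variable {V : Type*}

noncomputable def pathTo (G : SimpleGraph V) (hG : G.Connected) (u v : V) : List V :=
  letI := Classical.decEq V
  ((Classical.choice (hG.preconnected u v)).bypass).support.tail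

/-- `rt` is a valid remaining route from current position `c` to target `tgt`. -/
def RouteOK (G : SimpleGraph V) (c : V) (rt : List V) (tgt : V) (N : ℕ) : Prop :=
  List.Chain' (stepRel G) (c :: rt) ∧ (c :: rt).getLast (List.cons_ne_nil _ _) = tgt ∧
    rt.length ≤ N

theorem routeOK_pathTo [Fintype V] (G : SimpleGraph V) (hG : G.Connected) (u v : V) :
    RouteOK G u (pathTo G hG u v) v (Fintype.card V) := by
  letI := Classical.decEq V
  unfold pathTo
  set p := (Classical.choice (hG.preconnected u v)).bypass with hp
  have hsup : p.support = u :: p.support.tail := p.support_eq_cons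
  refine ⟨?_, ?_, ?_⟩
  · have h := p.isChain_adj_support
    rw [hsup] at h
    exact h.imp (fun _ _ hab => Or.inr hab)
  · have h := p.getLast_support
    rw [List.getLast_congr (by simp) (List.cons_ne_nil _ _) hsup] at h
    exact h
  · have h1 : p.length < Fintype.card V := by
      apply SimpleGraph.Walk.IsPath.length_lt
      exact SimpleGraph.Walk.bypass_isPath _
    have h2 := p.length_support
    have h3 : p.support.tail.length + 1 = p.length + 1 := by
      rw [← h2, hsup]; simp
    omega

open Classical in
/-- One transition of the cop machine, in response to robber move `x`. -/
noncomputable def mstep (G : SimpleGraph V) (k : V → ℕ) (hG : G.Connected)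
    (σ : MSt V) (x : V) : MSt V :=
  match hσ : σ.ph, σ.route with
  | true, y :: rest =>
      if stepRel G σ.pc y then { σ with pc := y, route := rest }
      else { σ with route := rest }
  | true, [] =>
      if k x < k σ.pc then
        { σ with ph := false, mv := true, route := pathTo G hG σ.pb σ.pc }
      else
        { σ with ph := false, mv := false, route := pathTo G hG σ.pa σ.pc }
  | false, y :: rest =>
      if σ.mv then
        (if stepRel G σ.pb y then { σ with pb := y, route := rest }
         else { σ with route := rest })
      else
        (if stepRel G σ.pa y then { σ with pa := y, route := rest }
         else { σ with route := rest })
  | false, [] =>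
      { σ with ph := true, route := pathTo G hG σ.pc (pivotD G k σ.pa σ.pb) }

def posSt (σ : MSt V) : Fin 3 → V := ![σ.pa, σ.pb, σ.pc]

theorem mstep_valid (G : SimpleGraph V) (k : V → ℕ) (hG : G.Connected)
    (σ : MSt V) (x : V) (i : Fin 3) :
    stepRel G (posSt σ i) (posSt (mstep G k hG σ x) i) := by
  obtain ⟨pa, pb, pc, ph, mv, route⟩ := σ
  have hrfl : ∀ v : V, stepRel G v v := fun v => Or.inl rfl
  cases ph <;> cases route <;> cases mv <;>
    simp only [mstep, posSt] <;> (try split_ifs) <;> fin_cases i <;>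
    simp_all [posSt] <;>
    first
      | exact hrfl _
      | assumption

/-- The invariant tied to a machine state and the current robber position. -/
def Inv (G : SimpleGraph V) (k : V → ℕ) (N : ℕ) (σ : MSt V) (ρ : V) : Prop :=
  match σ.ph, σ.mv with
  | true, _ => Seal G k σ.pa σ.pb ρ ∧ RouteOK G σ.pc σ.route (pivotD G k σ.pa σ.pb) N
  | false, true => Seal G k σ.pa σ.pc ρ ∧ RouteOK G σ.pb σ.route σ.pc N
  | false, false => Seal G k σ.pc σ.pb ρ ∧ RouteOK G σ.pa σ.route σ.pc N

def wid (k : V → ℕ) (σ : MSt V) : ℕ :=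
  match σ.ph, σ.mv with
  | true, _ => k σ.pb - k σ.pa
  | false, true => k σ.pc - k σ.pa
  | false, false => k σ.pb - k σ.pc

def Meas (k : V → ℕ) (N : ℕ) (σ : MSt V) : ℕ :=
  (2 * wid k σ + (if σ.ph then 0 else 1)) * (N + 1) + σ.route.length

theorem routeOK_cons {G : SimpleGraph V} {c y : V} {rt : List V} {tgt : V} {N : ℕ}
    (h : RouteOK G c (y :: rt) tgt N) : stepRel G c y ∧ RouteOK G y rt tgt N := by
  obtain ⟨hch, hlast, hlen⟩ := h
  rw [List.Chain', List.isChain_cons_cons] at hch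
  refine ⟨hch.1, hch.2, ?_, ?_⟩
  · rw [← hlast]
    exact (List.getLast_cons (List.cons_ne_nil _ _)).symm
  · simp only [List.length_cons] at hlen
    omega

theorem routeOK_nil {G : SimpleGraph V} {c : V} {tgt : V} {N : ℕ}
    (h : RouteOK G c [] tgt N) : c = tgt := by
  obtain ⟨-, hlast, -⟩ := h
  simpa using hlast

theorem meas_arith1 {w w' len' N : ℕ} (h : w' < w) (hl : len' ≤ N) :
    (2 * w' + 1) * (N + 1) + len' < 2 * w * (N + 1) := by
  have h1 : (2 * w' + 1) * (N + 1) + len' < (2 * w' + 2) * (N + 1) := by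
    have : (2 * w' + 2) * (N + 1) = (2 * w' + 1) * (N + 1) + (N + 1) := by ring
    omega
  have h2 : (2 * w' + 2) * (N + 1) ≤ 2 * w * (N + 1) :=
    Nat.mul_le_mul_right _ (by omega)
  omega

theorem meas_arith2 {w len' N : ℕ} (hl : len' ≤ N) :
    2 * w * (N + 1) + len' < (2 * w + 1) * (N + 1) := by
  have : (2 * w + 1) * (N + 1) = 2 * w * (N + 1) + (N + 1) := by ring
  omega

theorem meas_ph_true {k : V → ℕ} {N : ℕ} {pa pb pc : V} {mv : Bool} {route : List V} :
    Meas k N ⟨pa, pb, pc, true, mv, route⟩ = 2 * (k pb - k pa) * (N + 1) + route.length := by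
  simp [Meas, wid]

theorem meas_mv_true {k : V → ℕ} {N : ℕ} {pa pb pc : V} {route : List V} :
    Meas k N ⟨pa, pb, pc, false, true, route⟩ =
      (2 * (k pc - k pa) + 1) * (N + 1) + route.length := by
  simp [Meas, wid]

theorem meas_mv_false {k : V → ℕ} {N : ℕ} {pa pb pc : V} {route : List V} :
    Meas k N ⟨pa, pb, pc, false, false, route⟩ =
      (2 * (k pb - k pc) + 1) * (N + 1) + route.length := by
  simp [Meas, wid]

theorem inv_step [Fintype V] {G : SimpleGraph V} {k : V → ℕ}
    (hcr : NoCross G k) (hk : Function.Injective k) (hG : G.Connected)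
    {σ : MSt V} {x x' : V}
    (hInv : Inv G k (Fintype.card V) σ x)
    (hx : ∀ i : Fin 3, posSt σ i ≠ x)
    (hs : stepRel G x x')
    (hx' : ∀ i : Fin 3, posSt (mstep G k hG σ x) i ≠ x') :
    Inv G k (Fintype.card V) (mstep G k hG σ x) x' ∧
      Meas k (Fintype.card V) (mstep G k hG σ x) < Meas k (Fintype.card V) σ := by
  obtain ⟨pa, pb, pc, ph, mv, route⟩ := σ
  have hxa : pa ≠ x := by have := hx 0; simpa [posSt] using this
  have hxb : pb ≠ x := by have := hx 1; simpa [posSt] using this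
  have hxc : pc ≠ x := by have := hx 2; simpa [posSt] using this
  cases ph
  · -- ph = false : phase 2
    cases mv
    · -- mv = false : the `pa` guard is moving toward `pc`; seal pair (pc, pb)
      obtain ⟨hS, hR⟩ := hInv
      cases route with
      | cons y rest =>
        obtain ⟨hst, hR'⟩ := routeOK_cons hR
        have hm : mstep G k hG ⟨pa, pb, pc, false, false, y :: rest⟩ x =
            ⟨y, pb, pc, false, false, rest⟩ := by
          simp [mstep, hst]
        rw [hm]
        rw [hm] at hx'
        have hb' : pb ≠ x' := by have := hx' 1; simpa [posSt] using this
        have hc' : pc ≠ x' := by have := hx' 2; simpa [posSt] using this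
        refine ⟨⟨seal_step hS hs (Ne.symm hc') (Ne.symm hb'), hR'⟩, ?_⟩
        rw [meas_mv_false, meas_mv_false]
        simp only [List.length_cons]
        omega
      | nil =>
        have hpa : pa = pc := routeOK_nil hR
        have hm : mstep G k hG ⟨pa, pb, pc, false, false, []⟩ x =
            ⟨pa, pb, pc, true, false, pathTo G hG pc (pivotD G k pa pb)⟩ := by
          simp [mstep]
        rw [hm]
        rw [hm] at hx'
        have ha' : pa ≠ x' := by have := hx' 0; simpa [posSt] using this
        have hb' : pb ≠ x' := by have := hx' 1; simpa [posSt] using this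
        have hS2 : Seal G k pa pb x := by rw [hpa]; exact hS
        have hRnew := routeOK_pathTo G hG pc (pivotD G k pa pb)
        refine ⟨⟨seal_step hS2 hs (Ne.symm ha') (Ne.symm hb'), hRnew⟩, ?_⟩
        rw [meas_ph_true, meas_mv_false]
        have hw : k pb - k pa = k pb - k pc := by rw [hpa]
        rw [hw]
        have := meas_arith2 (w := k pb - k pc) hRnew.2.2
        simp only [List.length_nil]
        omega
    · -- mv = true : the `pb` guard is moving toward `pc`; seal pair (pa, pc)
      obtain ⟨hS, hR⟩ := hInv
      cases route with
      | cons y rest =>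
        obtain ⟨hst, hR'⟩ := routeOK_cons hR
        have hm : mstep G k hG ⟨pa, pb, pc, false, true, y :: rest⟩ x =
            ⟨pa, y, pc, false, true, rest⟩ := by
          simp [mstep, hst]
        rw [hm]
        rw [hm] at hx'
        have ha' : pa ≠ x' := by have := hx' 0; simpa [posSt] using this
        have hc' : pc ≠ x' := by have := hx' 2; simpa [posSt] using this
        refine ⟨⟨seal_step hS hs (Ne.symm ha') (Ne.symm hc'), hR'⟩, ?_⟩
        rw [meas_mv_true, meas_mv_true]
        simp only [List.length_cons]
        omega
      | nil =>
        have hpb : pb = pc := routeOK_nil hR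
        have hm : mstep G k hG ⟨pa, pb, pc, false, true, []⟩ x =
            ⟨pa, pb, pc, true, true, pathTo G hG pc (pivotD G k pa pb)⟩ := by
          simp [mstep]
        rw [hm]
        rw [hm] at hx'
        have ha' : pa ≠ x' := by have := hx' 0; simpa [posSt] using this
        have hb' : pb ≠ x' := by have := hx' 1; simpa [posSt] using this
        have hS2 : Seal G k pa pb x := by rw [hpb]; exact hS
        have hRnew := routeOK_pathTo G hG pc (pivotD G k pa pb)
        refine ⟨⟨seal_step hS2 hs (Ne.symm ha') (Ne.symm hb'), hRnew⟩, ?_⟩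
        rw [meas_ph_true, meas_mv_true]
        have hw : k pb - k pa = k pc - k pa := by rw [hpb]
        rw [hw]
        have := meas_arith2 (w := k pc - k pa) hRnew.2.2
        simp only [List.length_nil]
        omega
  · -- ph = true : phase 1, cop 3 travels to the pivot; seal pair (pa, pb)
    obtain ⟨hS, hR⟩ := hInv
    cases route with
    | cons y rest =>
      obtain ⟨hst, hR'⟩ := routeOK_cons hR
      have hm : mstep G k hG ⟨pa, pb, pc, true, mv, y :: rest⟩ x =
          ⟨pa, pb, y, true, mv, rest⟩ := by
        simp [mstep, hst]
      rw [hm]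
      rw [hm] at hx'
      have ha' : pa ≠ x' := by have := hx' 0; simpa [posSt] using this
      have hb' : pb ≠ x' := by have := hx' 1; simpa [posSt] using this
      refine ⟨⟨seal_step hS hs (Ne.symm ha') (Ne.symm hb'), hR'⟩, ?_⟩
      rw [meas_ph_true, meas_ph_true]
      simp only [List.length_cons]
      omega
    | nil =>
      have hpc : pc = pivotD G k pa pb := routeOK_nil hR
      have hpiv : IsPivot G k pa pb pc := by
        rw [hpc]; exact pivotD_spec (pivot_exists hG hS)
      obtain ⟨⟨hapc, hpcb⟩, hside⟩ := hpiv
      have hax : k pa < k x := hS.mem.1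
      have hxbk : k x < k pb := hS.mem.2
      by_cases hlt : k x < k pc
      · have hm : mstep G k hG ⟨pa, pb, pc, true, mv, []⟩ x =
            ⟨pa, pb, pc, false, true, pathTo G hG pb pc⟩ := by
          simp [mstep, hlt]
        rw [hm]
        rw [hm] at hx'
        have ha' : pa ≠ x' := by have := hx' 0; simpa [posSt] using this
        have hc' : pc ≠ x' := by have := hx' 2; simpa [posSt] using this
        have hSx : Seal G k pa pc x := by
          rcases hside with ⟨hadj, hmax⟩ | ⟨hadj, hmin⟩
          · exact seal_of_edge hcr hk hadj hax hlt
          · exact seal_shrink_left hcr hk hS hpcb hadj hmin hlt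
        have hRnew := routeOK_pathTo G hG pb pc
        refine ⟨⟨seal_step hSx hs (Ne.symm ha') (Ne.symm hc'), hRnew⟩, ?_⟩
        rw [meas_ph_true, meas_mv_true]
        have harith := meas_arith1 (w := k pb - k pa) (w' := k pc - k pa)
          (by omega) hRnew.2.2
        simp only [List.length_nil]
        omega
      · have hgt : k pc < k x := by
          have : k x ≠ k pc := fun hh => hxc (hk hh).symm
          omega
        have hm : mstep G k hG ⟨pa, pb, pc, true, mv, []⟩ x =
            ⟨pa, pb, pc, false, false, pathTo G hG pa pc⟩ := by
          simp [mstep, hlt]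
        rw [hm]
        rw [hm] at hx'
        have hb' : pb ≠ x' := by have := hx' 1; simpa [posSt] using this
        have hc' : pc ≠ x' := by have := hx' 2; simpa [posSt] using this
        have hSx : Seal G k pc pb x := by
          rcases hside with ⟨hadj, hmax⟩ | ⟨hadj, hmin⟩
          · exact seal_shrink_right hcr hk hS hapc hadj hmax hgt
          · exact seal_of_edge' hcr hk hadj.symm hgt hxbk
        have hRnew := routeOK_pathTo G hG pa pc
        refine ⟨⟨seal_step hSx hs (Ne.symm hc') (Ne.symm hb'), hRnew⟩, ?_⟩
        rw [meas_ph_true, meas_mv_false]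
        have harith := meas_arith1 (w := k pb - k pa) (w' := k pb - k pc)
          (by omega) hRnew.2.2
        simp only [List.length_nil]
        omega
end SCRAux

/-- Let `G` be a finite connected simple graph admitting an
outerplanar (one-page) layout: an enumeration `v_0, …, v_{n-1}` of its vertices
such that there are no two edges `v_a v_b` and `v_c v_d` of `G` with
`a < c < b < d`.  Then `s(G) ≤ 3`; that is, three cops suffice to surround the
robber on `G`. -/
theorem outerplanar_three_cops {V : Type*} [Fintype V] (G : SimpleGraph V)
    (hconn : G.Connected) (n : ℕ) (e : Fin n ≃ V)
    (hlayout : ∀ a b c d : Fin n, a < c → c < b → b < d →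
      G.Adj (e a) (e b) → G.Adj (e c) (e d) → False) :
    CopsWin G 3 := by
  classical
  set k : V → ℕ := fun v => ((e.symm v : Fin n) : ℕ) with hkdef
  have hk : Function.Injective k := by
    intro u v huv
    have h1 : e.symm u = e.symm v := Fin.val_injective huv
    have := congrArg e h1
    simpa using this
  have hcr : SCRAux.NoCross G k := by
    intro x y u w hxy huw h1 h2 h3
    refine hlayout (e.symm x) (e.symm y) (e.symm u) (e.symm w) ?_ ?_ ?_ ?_ ?_
    · exact h1
    · exact h2
    · exact h3
    · simpa using hxy
    · simpa using huw
  have hV : Nonempty V := hconn.nonempty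
  have hn : 0 < n := by
    rcases hV with ⟨v⟩
    exact (e.symm v).pos
  set va : V := e ⟨0, hn⟩ with hva
  set vb : V := e ⟨n - 1, by omega⟩ with hvb
  have hkva : k va = 0 := by simp [hkdef, hva]
  have hkvb : k vb = n - 1 := by simp [hkdef, hvb]
  set σ0 : SCRAux.MSt V :=
    ⟨va, vb, va, true, true, SCRAux.pathTo G hconn va (SCRAux.pivotD G k va vb)⟩ with hσ0
  refine ⟨fun h => SCRAux.posSt (h.foldl (SCRAux.mstep G k hconn) σ0), ?_, ?_⟩
  · intro h x i
    have hfold : (h ++ [x]).foldl (SCRAux.mstep G k hconn) σ0 =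
        SCRAux.mstep G k hconn (h.foldl (SCRAux.mstep G k hconn) σ0) x := by
      simp [List.foldl_append]
    show stepRel G (SCRAux.posSt (h.foldl (SCRAux.mstep G k hconn) σ0) i)
        (SCRAux.posSt ((h ++ [x]).foldl (SCRAux.mstep G k hconn) σ0) i)
    rw [hfold]
    exact SCRAux.mstep_valid G k hconn _ x i
  · intro r hr
    exfalso
    obtain ⟨hmove, havoid⟩ := hr
    obtain ⟨σs, hσt⟩ : ∃ σs : ℕ → SCRAux.MSt V,
        ∀ t, σs t = (histList r t).foldl (SCRAux.mstep G k hconn) σ0 :=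
      ⟨_, fun _ => rfl⟩
    have havoid' : ∀ t (i : Fin 3), SCRAux.posSt (σs t) i ≠ r t := by
      intro t i
      rw [hσt]
      exact havoid t i
    have hsucc : ∀ t, σs (t + 1) = SCRAux.mstep G k hconn (σs t) (r t) := by
      intro t
      have hl : histList r (t + 1) = histList r t ++ [r t] := by
        simp [histList, List.range_succ]
      rw [hσt, hσt, hl]
      simp only [List.foldl_append, List.foldl_cons, List.foldl_nil]
    have h0 : SCRAux.Inv G k (Fintype.card V) (σs 0) (r 0) := by
      have hs0 : σs 0 = σ0 := by
        rw [hσt]; simp [histList]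
      rw [hs0, hσ0]
      refine ⟨?_, SCRAux.routeOK_pathTo G hconn va _⟩
      have hbound : ∀ z : V, z ≠ va → z ≠ vb → k va < k z ∧ k z < k vb := by
        intro z h1 h2
        have hlt : k z < n := (e.symm z).isLt
        have hza : k z ≠ 0 := by
          intro h
          apply h1
          have : e.symm z = (⟨0, hn⟩ : Fin n) := Fin.val_injective (by simpa [hkdef] using h)
          have := congrArg e this
          simpa [hva] using this
        have hzb : k z ≠ n - 1 := by
          intro h
          apply h2
          have : e.symm z = (⟨n - 1, by omega⟩ : Fin n) :=
            Fin.val_injective (by simpa [hkdef] using h)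
          have := congrArg e this
          simpa [hvb] using this
        omega
      have hs0 : σs 0 = σ0 := by
        rw [hσt]; simp [histList]
      have hr0a : r 0 ≠ va := by
        have := havoid' 0 0
        rw [hs0] at this
        simpa [SCRAux.posSt, hσ0] using this.symm
      have hr0b : r 0 ≠ vb := by
        have := havoid' 0 1
        rw [hs0] at this
        simpa [SCRAux.posSt, hσ0] using this.symm
      intro z hz
      induction hz with
      | refl => exact hbound _ hr0a hr0b
      | @tail y z hR hstep ih => exact hbound _ hstep.2.1 hstep.2.2
    have hkey : ∀ t, SCRAux.Inv G k (Fintype.card V) (σs t) (r t) := by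
      intro t
      induction t with
      | zero => exact h0
      | succ t ih =>
        rw [hsucc t]
        refine (SCRAux.inv_step hcr hk hconn ih (fun i => (havoid' t i)) (hmove t) ?_).1
        intro i
        have := havoid' (t + 1) i
        rw [hsucc t] at this
        exact this
    have hdec : ∀ t, SCRAux.Meas k (Fintype.card V) (σs (t + 1)) <
        SCRAux.Meas k (Fintype.card V) (σs t) := by
      intro t
      rw [hsucc t]
      refine (SCRAux.inv_step hcr hk hconn (hkey t) (fun i => (havoid' t i)) (hmove t) ?_).2
      intro i
      have := havoid' (t + 1) i
      rw [hsucc t] at this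
      exact this
    have hmono : ∀ t, SCRAux.Meas k (Fintype.card V) (σs t) + t ≤
        SCRAux.Meas k (Fintype.card V) (σs 0) := by
      intro t
      induction t with
      | zero => omega
      | succ t ih =>
        have := hdec t
        omega
    have := hmono (SCRAux.Meas k (Fintype.card V) (σs 0) + 1)
    omega
end

section
/- Let G be the 2 × 4 grid graph, i.e., the Cartesian product of a path on 2 vertices with a path on 4 vertices (a bipartite outerplanar graph on 8 vertices). Then s(G) = 3: two cops do not suffice to surround the robber on G, while three cops do. -/
/-! ### Setup -/

abbrev GG := (SimpleGraph.pathGraph 2).boxProd (SimpleGraph.pathGraph 4)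
abbrev VV := Fin 2 × Fin 4

instance pgDec (n : ℕ) : DecidableRel ((SimpleGraph.pathGraph n).Adj) :=
  fun _ _ => decidable_of_iff _ (SimpleGraph.pathGraph_adj).symm

instance : DecidableRel GG.Adj :=
  fun _ _ => decidable_of_iff _ (SimpleGraph.boxProd_adj).symm

instance : DecidableRel (stepRel GG) :=
  fun x y => decidable_of_iff (x = y ∨ GG.Adj x y) Iff.rfl

def enc (p : VV) : ℕ := p.1.val * 4 + p.2.val

def dec (n : Fin 8) : VV := (⟨n.val / 4, by omega⟩, ⟨n.val % 4, by omega⟩)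

/-! ### Three cops win -/

def c0 : Fin 3 → VV := ![dec 0, dec 2, dec 6]

def tauT : Fin 8 → Fin 3 → Fin 8 :=
  ![![0,2,6], ![0,2,5], ![0,2,6], ![0,2,7], ![0,2,5], ![4,1,6], ![0,2,6], ![0,3,6]]

def tau (v : VV) : Fin 3 → VV := fun i => dec (tauT ⟨enc v, by obtain ⟨⟨a,_⟩,⟨b,_⟩⟩ := v; simp [enc]; omega⟩ i)

def F1 : List VV → Fin 3 → VV
  | [] => c0
  | x :: _ => tau x

lemma valid1 : ∀ (x : VV) (i : Fin 3), stepRel GG (c0 i) (tau x i) := by decide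

lemma win1 : ∀ v : VV, (∀ i : Fin 3, c0 i ≠ v) → ∀ w, GG.Adj v w → ∃ i, tau v i = w := by
  decide

theorem copsWin3 : CopsWin GG 3 := by
  refine ⟨F1, ?_, ?_⟩
  · intro h x i
    cases h with
    | nil => exact valid1 x i
    | cons y t => exact Or.inl rfl
  · intro r hr
    refine ⟨0, ?_⟩
    intro w hw
    have h0 : histList r 0 = [] := rfl
    have h1 : histList r 1 = [r 0] := rfl
    have hne : ∀ i : Fin 3, c0 i ≠ r 0 := by
      intro i
      have := hr.2 0 i
      rwa [h0] at this
    rw [h1]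
    exact win1 (r 0) hne w hw

/-! ### Two cops lose -/

def SAFE2 : ℕ := 6672690423693322874456349691430993315010383254461592763626353279229266400831614368247735367324641460872408130920949305772469602953583948740698463201060606

def safeB (c1 c2 v : VV) : Prop := Nat.testBit SAFE2 (enc c1 * 64 + enc c2 * 8 + enc v) = true

instance : ∀ c1 c2 v, Decidable (safeB c1 c2 v) := fun _ _ _ => instDecidableEqBool _ _

lemma safeA : ∀ c1 c2 : VV, ∃ v : VV, c1 ≠ v ∧ c2 ≠ v ∧ safeB c1 c2 v := by decide

set_option maxHeartbeats 4000000 in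
lemma safeC : ∀ c1 c2 v c1' c2' : VV, safeB c1 c2 v → stepRel GG c1 c1' → stepRel GG c2 c2' →
    (∃ w, GG.Adj v w ∧ c1' ≠ w ∧ c2' ≠ w) ∧
      ∃ v', stepRel GG v v' ∧ c1' ≠ v' ∧ c2' ≠ v' ∧ safeB c1' c2' v' := by
  decide

theorem robberEscape {V : Type*} (G : SimpleGraph V) (Safe : (Fin 2 → V) → V → Prop)
    (hA : ∀ c : Fin 2 → V, ∃ v, (∀ i, c i ≠ v) ∧ Safe c v)
    (hC : ∀ c c' : Fin 2 → V, ∀ v, Safe c v → (∀ i, stepRel G (c i) (c' i)) →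
      (∃ w, G.Adj v w ∧ ∀ i, c' i ≠ w) ∧
        ∃ v', stepRel G v v' ∧ (∀ i, c' i ≠ v') ∧ Safe c' v') :
    ¬ CopsWin G 2 := by
  rintro ⟨F, hF, hwin⟩
  -- choice functions
  obtain ⟨v0, hv0⟩ := hA (F [])
  have hstep : ∀ (h : List V) (v : V), Safe (F h) v →
      ∃ v', stepRel G v v' ∧ (∀ i, F (h ++ [v]) i ≠ v') ∧ Safe (F (h ++ [v])) v' :=
    fun h v hs => ((hC (F h) (F (h ++ [v])) v hs (fun i => hF h v i)).2)
  classical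
  choose! vn hvn1 hvn2 hvn3 using hstep
  -- the play: g t = (history of length t, current robber position r t)
  let g : ℕ → List V × V := fun t =>
    Nat.rec (([], v0)) (fun _ p => (p.1 ++ [p.2], vn p.1 p.2)) t
  have hg0 : g 0 = ([], v0) := rfl
  have hgs : ∀ t, g (t + 1) = ((g t).1 ++ [(g t).2], vn (g t).1 (g t).2) := fun t => rfl
  set r : ℕ → V := fun t => (g t).2 with hr
  -- invariant
  have inv : ∀ t, Safe (F (g t).1) (g t).2 := by
    intro t
    induction t with
    | zero => exact hv0.2
    | succ t ih => rw [hgs t]; exact hvn3 (g t).1 (g t).2 ih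
  -- history matches
  have hhist : ∀ t, histList r t = (g t).1 := by
    intro t
    induction t with
    | zero => rfl
    | succ t ih =>
      have : histList r (t + 1) = histList r t ++ [r t] := by
        simp [histList, List.range_succ]
      rw [this, ih, hgs t]
  have hlegal : LegalPlay G F r := by
    constructor
    · intro t
      have := hvn1 (g t).1 (g t).2 (inv t)
      simpa [hr, hgs t] using this
    · intro t i
      cases t with
      | zero => exact hv0.1 i
      | succ t =>
        have := hvn2 (g t).1 (g t).2 (inv t) i
        rw [hhist (t + 1), hgs t]
        simpa [hr, hgs t] using this
  obtain ⟨t, hsur⟩ := hwin r hlegal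
  -- contradiction: some neighbor of r t is uncovered by F (hist (t+1))
  have hunc := (hC (F (g t).1) (F ((g t).1 ++ [(g t).2])) (g t).2 (inv t)
      (fun i => hF (g t).1 (g t).2 i)).1
  obtain ⟨w, hadj, hw⟩ := hunc
  obtain ⟨i, hi⟩ := hsur w (by simpa [hr] using hadj)
  rw [hhist (t + 1), hgs t] at hi
  exact hw i hi

theorem copsLose2 : ¬ CopsWin GG 2 := by
  apply robberEscape GG (fun c v => safeB (c 0) (c 1) v)
  · intro c
    obtain ⟨v, h1, h2, h3⟩ := safeA (c 0) (c 1)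
    exact ⟨v, by rw [Fin.forall_fin_two]; exact ⟨h1, h2⟩, h3⟩
  · intro c c' v hs hstep
    obtain ⟨⟨w, hw1, hw2, hw3⟩, ⟨v', h1, h2, h3, h4⟩⟩ :=
      safeC (c 0) (c 1) v (c' 0) (c' 1) hs (hstep 0) (hstep 1)
    exact ⟨⟨w, hw1, by rw [Fin.forall_fin_two]; exact ⟨hw2, hw3⟩⟩,
      ⟨v', h1, by rw [Fin.forall_fin_two]; exact ⟨h2, h3⟩, h4⟩⟩

/-- Let `G` be the `2 × 4` grid graph, i.e. the Cartesian (box)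
product of a path on `2` vertices with a path on `4` vertices.  Then `s(G) = 3`:
two cops do not suffice to surround the robber on `G`, while three cops do. -/
theorem grid_2x4_surrounding_number :
    CopsWin ((SimpleGraph.pathGraph 2).boxProd (SimpleGraph.pathGraph 4)) 3 ∧
      ¬ CopsWin ((SimpleGraph.pathGraph 2).boxProd (SimpleGraph.pathGraph 4)) 2 :=
  ⟨copsWin3, copsLose2⟩
end
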